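/- arXiv:2105.03506 — 4 statements merged into one kernel-verified Lean document; each statement's English description precedes it below -/
import Mathlib

section
/- Define φ_sph(t)=q̄·(c+t)/(c+ξ'(q̄)) for t∈[0,ξ'(q̄)] and ψ_sph=ξ'∘φ_sph. Then ψ_sph maps [0,ξ'(q̄)] into itself, is strictly increasing and convex on [0,ξ'(q̄)], and satisfies ψ_sph(ξ'(q̄))=ξ'(q̄), ψ_sph'(ξ'(q̄))=1, and ψ_sph(t)>t for every t∈[0,ξ'(q̄)). -/
open Set Filter MeasureTheory

/-- A mean-field spin glass mixture function `ξ(z) = ∑_{p≥2} c_p² z^p`: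
nonnegative, exponentially decaying coefficients (indexed so that `coeff p = c_p²`),
vanishing in degrees 0 and 1, and not identically zero. -/
structure MixtureFunction where
  coeff : ℕ → ℝ
  coeff_nonneg : ∀ p, 0 ≤ coeff p
  coeff_zero : coeff 0 = 0
  coeff_one : coeff 1 = 0
  coeff_decay : ∃ C r : ℝ, 0 < C ∧ 0 < r ∧ r < 1 ∧ ∀ p, coeff p ≤ C * r ^ p
  nontrivial : ∃ p, coeff p ≠ 0

/-- The mixture function `ξ(z) = ∑_p c_p² z^p`. -/
noncomputable def MixtureFunction.xi (ξ : MixtureFunction) (z : ℝ) : ℝ :=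
  ∑' p : ℕ, ξ.coeff p * z ^ p

/-- The first derivative `ξ'(z) = ∑_p p c_p² z^(p-1)`. -/
noncomputable def MixtureFunction.xi1 (ξ : MixtureFunction) (z : ℝ) : ℝ :=
  ∑' p : ℕ, (p : ℝ) * ξ.coeff p * z ^ (p - 1)

/-- The second derivative `ξ''(z) = ∑_p p(p-1) c_p² z^(p-2)`. -/
noncomputable def MixtureFunction.xi2 (ξ : MixtureFunction) (z : ℝ) : ℝ :=
  ∑' p : ℕ, (p : ℝ) * ((p : ℝ) - 1) * ξ.coeff p * z ^ (p - 2)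

/-- The third derivative `ξ'''(z) = ∑_p p(p-1)(p-2) c_p² z^(p-3)`. -/
noncomputable def MixtureFunction.xi3 (ξ : MixtureFunction) (z : ℝ) : ℝ :=
  ∑' p : ℕ, (p : ℝ) * ((p : ℝ) - 1) * ((p : ℝ) - 2) * ξ.coeff p * z ^ (p - 3)

lemma abs_le_one_of_mem {z : ℝ} (hz : z ∈ Icc (0:ℝ) 1) : |z| ≤ 1 := by
  rw [abs_of_nonneg hz.1]; exact hz.2

namespace MixtureFunction
variable (ξ : MixtureFunction)

lemma summable_k (k : ℕ) : Summable (fun p : ℕ => (p : ℝ) ^ k * ξ.coeff p) := by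
  obtain ⟨C, r, hC, hr0, hr1, hb⟩ := ξ.coeff_decay
  have hs : Summable (fun p : ℕ => C * ((p : ℝ) ^ k * r ^ p)) :=
    (summable_pow_mul_geometric_of_norm_lt_one k
      (by rw [Real.norm_eq_abs, abs_of_nonneg hr0.le]; exact hr1)).mul_left C
  refine Summable.of_nonneg_of_le (fun p => mul_nonneg (by positivity) (ξ.coeff_nonneg p))
    (fun p => ?_) hs
  have := hb p
  have hpk : (0:ℝ) ≤ (p:ℝ)^k := by positivity
  nlinarith

lemma summable1 {z : ℝ} (hz : |z| ≤ 1) :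
    Summable (fun p : ℕ => (p : ℝ) * ξ.coeff p * z ^ (p - 1)) := by
  refine Summable.of_norm_bounded (ξ.summable_k 1) (fun p => ?_)
  have h1 : |z ^ (p-1)| ≤ 1 := by
    rw [abs_pow]; exact pow_le_one₀ (abs_nonneg z) hz
  have h2 : (0:ℝ) ≤ (p:ℝ) * ξ.coeff p := mul_nonneg (by positivity) (ξ.coeff_nonneg p)
  rw [Real.norm_eq_abs, abs_mul, abs_of_nonneg h2, pow_one]
  nlinarith

lemma summable2 {z : ℝ} (hz : |z| ≤ 1) :
    Summable (fun p : ℕ => (p : ℝ) * ((p : ℝ) - 1) * ξ.coeff p * z ^ (p - 2)) := by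
  refine Summable.of_norm_bounded (ξ.summable_k 2) (fun p => ?_)
  have h1 : |z ^ (p-2)| ≤ 1 := by
    rw [abs_pow]; exact pow_le_one₀ (abs_nonneg z) hz
  rcases p with _ | q
  · simp
  · have h3 : (0:ℝ) ≤ (q+1:ℕ) := by positivity
    have h4 : ((q+1:ℕ):ℝ) - 1 = (q:ℕ) := by push_cast; ring
    have h2 : (0:ℝ) ≤ ((q+1:ℕ):ℝ) * (((q+1:ℕ):ℝ) - 1) * ξ.coeff (q+1) := by
      rw [h4]; exact mul_nonneg (mul_nonneg h3 (by positivity)) (ξ.coeff_nonneg _)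
    rw [Real.norm_eq_abs, abs_mul, abs_of_nonneg h2]
    have h5 : ((q+1:ℕ):ℝ) * (((q+1:ℕ):ℝ) - 1) ≤ ((q+1:ℕ):ℝ)^2 := by
      rw [h4]; push_cast; nlinarith
    have := ξ.coeff_nonneg (q+1)
    nlinarith

lemma xi1_nonneg {z : ℝ} (hz : z ∈ Icc (0:ℝ) 1) : 0 ≤ ξ.xi1 z :=
  tsum_nonneg fun p => mul_nonneg (mul_nonneg (by positivity) (ξ.coeff_nonneg p))
    (pow_nonneg hz.1 _)

lemma xi1_monotone : MonotoneOn ξ.xi1 (Icc (0:ℝ) 1) := by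
  intro x hx y hy hxy
  refine Summable.tsum_le_tsum (fun p => ?_) (ξ.summable1 (abs_le_one_of_mem hx))
    (ξ.summable1 (abs_le_one_of_mem hy))
  exact mul_le_mul_of_nonneg_left (pow_le_pow_left₀ hx.1 hxy _)
    (mul_nonneg (by positivity) (ξ.coeff_nonneg p))

lemma exists_ge_two : ∃ p, 2 ≤ p ∧ ξ.coeff p ≠ 0 := by
  obtain ⟨p, hp⟩ := ξ.nontrivial
  refine ⟨p, ?_, hp⟩
  by_contra h
  interval_cases p
  · exact hp ξ.coeff_zero
  · exact hp ξ.coeff_one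

lemma xi1_strictMono : StrictMonoOn ξ.xi1 (Icc (0:ℝ) 1) := by
  intro x hx y hy hxy
  obtain ⟨p₀, hp₀2, hp₀⟩ := ξ.exists_ge_two
  have hcp : 0 < ξ.coeff p₀ := lt_of_le_of_ne (ξ.coeff_nonneg p₀) (Ne.symm hp₀)
  refine Summable.tsum_lt_tsum (i := p₀) (fun p => mul_le_mul_of_nonneg_left
      (pow_le_pow_left₀ hx.1 hxy.le _)
      (mul_nonneg (by positivity) (ξ.coeff_nonneg p))) ?_
    (ξ.summable1 (abs_le_one_of_mem hx)) (ξ.summable1 (abs_le_one_of_mem hy))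
  have hpow : x ^ (p₀ - 1) < y ^ (p₀ - 1) :=
    pow_lt_pow_left₀ hxy hx.1 (by omega)
  have : (0:ℝ) < (p₀:ℝ) * ξ.coeff p₀ := by
    have : (0:ℝ) < (p₀:ℝ) := by exact_mod_cast Nat.lt_of_lt_of_le two_pos hp₀2
    positivity
  exact mul_lt_mul_of_pos_left hpow this

lemma xi2_strictMono (h3 : ∃ p, 3 ≤ p ∧ ξ.coeff p ≠ 0) :
    StrictMonoOn ξ.xi2 (Icc (0:ℝ) 1) := by
  intro x hx y hy hxy
  obtain ⟨p₀, hp₀3, hp₀⟩ := h3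
  have hcp : 0 < ξ.coeff p₀ := lt_of_le_of_ne (ξ.coeff_nonneg p₀) (Ne.symm hp₀)
  have hfac : ∀ p : ℕ, (0:ℝ) ≤ (p:ℝ) * ((p:ℝ) - 1) * ξ.coeff p := by
    intro p
    rcases p with _ | q
    · simp
    · have h4 : ((q+1:ℕ):ℝ) - 1 = (q:ℕ) := by push_cast; ring
      rw [h4]
      exact mul_nonneg (mul_nonneg (by positivity) (by positivity)) (ξ.coeff_nonneg _)
  refine Summable.tsum_lt_tsum (i := p₀) (fun p => mul_le_mul_of_nonneg_left
      (pow_le_pow_left₀ hx.1 hxy.le _) (hfac p)) ?_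
    (ξ.summable2 (abs_le_one_of_mem hx)) (ξ.summable2 (abs_le_one_of_mem hy))
  have hpow : x ^ (p₀ - 2) < y ^ (p₀ - 2) :=
    pow_lt_pow_left₀ hxy hx.1 (by omega)
  have hp0R : (2:ℝ) ≤ (p₀:ℝ) := by exact_mod_cast Nat.le_of_succ_le hp₀3
  have : (0:ℝ) < (p₀:ℝ) * ((p₀:ℝ) - 1) * ξ.coeff p₀ :=
    mul_pos (mul_pos (by linarith) (by linarith)) hcp
  exact mul_lt_mul_of_pos_left hpow this

lemma xi1_convex : ConvexOn ℝ (Icc (0:ℝ) 1) ξ.xi1 := by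
  refine ⟨convex_Icc _ _, fun x hx y hy a b ha hb hab => ?_⟩
  simp only [smul_eq_mul]
  rw [xi1, xi1, xi1, ← tsum_mul_left, ← tsum_mul_left,
    ← Summable.tsum_add ((ξ.summable1 (abs_le_one_of_mem hx)).mul_left a)
      ((ξ.summable1 (abs_le_one_of_mem hy)).mul_left b)]
  have hmem : a * x + b * y ∈ Icc (0:ℝ) 1 :=
    (convex_Icc (0:ℝ) 1) hx hy ha hb hab
  refine Summable.tsum_le_tsum (fun p => ?_) (ξ.summable1 (abs_le_one_of_mem hmem)) ?_
  · have hconv := (convexOn_pow (p-1)).2 (mem_Ici.2 hx.1) (mem_Ici.2 hy.1) ha hb hab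
    simp only [smul_eq_mul] at hconv
    have hnn : (0:ℝ) ≤ (p:ℝ) * ξ.coeff p := mul_nonneg (by positivity) (ξ.coeff_nonneg p)
    calc (p:ℝ) * ξ.coeff p * (a*x+b*y)^(p-1)
        ≤ (p:ℝ) * ξ.coeff p * (a * x^(p-1) + b * y^(p-1)) :=
          mul_le_mul_of_nonneg_left hconv hnn
      _ = a * ((p:ℝ) * ξ.coeff p * x^(p-1)) + b * ((p:ℝ) * ξ.coeff p * y^(p-1)) := by ring
  · exact ((ξ.summable1 (abs_le_one_of_mem hx)).mul_left a).add
      ((ξ.summable1 (abs_le_one_of_mem hy)).mul_left b)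

lemma hasDerivAt_xi1 {x : ℝ} (hx : x ∈ Ioo (-1:ℝ) 1) :
    HasDerivAt ξ.xi1 (ξ.xi2 x) x := by
  have habs : ∀ y : ℝ, y ∈ Ioo (-1:ℝ) 1 → |y| ≤ 1 := by
    intro y hy; rw [abs_le]; exact ⟨hy.1.le, hy.2.le⟩
  have hg : ∀ (p : ℕ) (y : ℝ), y ∈ Ioo (-1:ℝ) 1 →
      HasDerivAt (fun z : ℝ => (p:ℝ) * ξ.coeff p * z ^ (p-1))
        ((p:ℝ) * ((p:ℝ)-1) * ξ.coeff p * y ^ (p-2)) y := by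
    intro p y _
    rcases p with _ | _ | m
    · simpa using hasDerivAt_const y ((0:ℝ))
    · have h := hasDerivAt_const y ((1:ℝ) * ξ.coeff 1)
      simpa [ξ.coeff_one] using h
    · have h := (hasDerivAt_pow (m+1) y).const_mul (((m+2:ℕ):ℝ) * ξ.coeff (m+2))
      refine h.congr_deriv ?_
      push_cast
      ring_nf
  have hg' : ∀ (p : ℕ) (y : ℝ), y ∈ Ioo (-1:ℝ) 1 →
      ‖(p:ℝ) * ((p:ℝ)-1) * ξ.coeff p * y ^ (p-2)‖ ≤ (p:ℝ)^2 * ξ.coeff p := by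
    intro p y hy
    have h1 : |y ^ (p-2)| ≤ 1 := by
      rw [abs_pow]; exact pow_le_one₀ (abs_nonneg y) (habs y hy)
    rcases p with _ | q
    · simp
    · have h4 : ((q+1:ℕ):ℝ) - 1 = (q:ℕ) := by push_cast; ring
      have h2 : (0:ℝ) ≤ ((q+1:ℕ):ℝ) * (((q+1:ℕ):ℝ) - 1) * ξ.coeff (q+1) := by
        rw [h4]; exact mul_nonneg (mul_nonneg (by positivity) (by positivity))
          (ξ.coeff_nonneg _)
      rw [Real.norm_eq_abs, abs_mul, abs_of_nonneg h2]
      have h5 : ((q+1:ℕ):ℝ) * (((q+1:ℕ):ℝ) - 1) ≤ ((q+1:ℕ):ℝ)^2 := by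
        rw [h4]; push_cast; nlinarith
      have := ξ.coeff_nonneg (q+1)
      nlinarith
  have key : HasDerivAt (fun z : ℝ => ∑' p : ℕ, (p:ℝ) * ξ.coeff p * z ^ (p-1))
      (∑' p : ℕ, (p:ℝ) * ((p:ℝ)-1) * ξ.coeff p * x ^ (p-2)) x :=
    hasDerivAt_tsum_of_isPreconnected (y₀ := (0:ℝ)) (ξ.summable_k 2) isOpen_Ioo
      (convex_Ioo (-1:ℝ) 1).isPreconnected hg hg'
      (mem_Ioo.2 ⟨by norm_num, by norm_num⟩) (ξ.summable1 (by norm_num)) hx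
  exact key



end MixtureFunction
/-- Properties of the state-evolution map `ψ_sph = ξ' ∘ φ_sph`,
where `φ_sph(t) = q̄ (c + t)/(c + ξ'(q̄))`: it maps `[0, ξ'(q̄)]` into itself, is strictly
increasing and convex there, fixes `ξ'(q̄)` with derivative `1` there, and lies strictly
above the diagonal below the fixed point. -/
theorem psi_sph_properties (ξ : MixtureFunction) (c : ℝ) (hc : 0 < c)
    (hlt : c + ξ.xi1 1 < ξ.xi2 1)
    (qbar : ℝ) (hqbar : qbar ∈ Ioo (0 : ℝ) 1)
    (hfix : c + ξ.xi1 qbar = qbar * ξ.xi2 qbar) :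
    let φ : ℝ → ℝ := fun t => qbar * (c + t) / (c + ξ.xi1 qbar)
    let ψ : ℝ → ℝ := fun t => ξ.xi1 (φ t)
    MapsTo ψ (Icc 0 (ξ.xi1 qbar)) (Icc 0 (ξ.xi1 qbar)) ∧
      StrictMonoOn ψ (Icc 0 (ξ.xi1 qbar)) ∧
      ConvexOn ℝ (Icc 0 (ξ.xi1 qbar)) ψ ∧
      ψ (ξ.xi1 qbar) = ξ.xi1 qbar ∧
      HasDerivAt ψ 1 (ξ.xi1 qbar) ∧
      ∀ t ∈ Ico 0 (ξ.xi1 qbar), t < ψ t := by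
  intro φ ψ
  have hq0 := hqbar.1
  have hq1 := hqbar.2
  have hqIcc : qbar ∈ Icc (0:ℝ) 1 := ⟨hq0.le, hq1.le⟩
  set M : ℝ := ξ.xi1 qbar with hMdef
  have hM0 : 0 ≤ M := ξ.xi1_nonneg hqIcc
  have hD : 0 < c + M := by linarith
  have hφeq : ∀ t, φ t = qbar * (c + t) / (c + M) := fun t => rfl
  have hφ_mem : ∀ t ∈ Icc (0:ℝ) M, φ t ∈ Icc (0:ℝ) 1 := by
    intro t ht
    rw [hφeq]
    constructor
    · exact div_nonneg (by nlinarith [ht.1]) hD.le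
    · have h1 : qbar * (c + t) ≤ qbar * (c + M) := by nlinarith [ht.2]
      have : qbar * (c + t) / (c + M) ≤ qbar := by
        rw [div_le_iff₀ hD]; nlinarith
      linarith
  have hφ_le : ∀ t ∈ Icc (0:ℝ) M, φ t ≤ qbar := by
    intro t ht
    rw [hφeq, div_le_iff₀ hD]
    nlinarith [ht.2]
  have hφ_mono : ∀ {t1 t2 : ℝ}, 0 ≤ t1 → t1 < t2 → φ t1 < φ t2 := by
    intro t1 t2 _ h12
    rw [hφeq, hφeq]
    exact (div_lt_div_iff_of_pos_right hD).2 (by nlinarith)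
  have hφM : φ M = qbar := by
    rw [hφeq, mul_div_assoc, div_self hD.ne', mul_one]
  have hψfix : ψ M = M := by
    show ξ.xi1 (φ M) = M
    rw [hφM]
  have hq_Ioo : qbar ∈ Ioo (-1:ℝ) 1 := ⟨by linarith, hq1⟩
  have hval : ξ.xi2 qbar * (qbar / (c + M)) = 1 := by
    field_simp
    linarith [hfix]
  have hφd : ∀ s : ℝ, HasDerivAt φ (qbar / (c + M)) s := by
    intro s
    have h := (((hasDerivAt_id s).const_add c).const_mul qbar).div_const (c + M)
    simpa using h
  have hφ_Ioo : ∀ t ∈ Icc (0:ℝ) M, φ t ∈ Ioo (-1:ℝ) 1 := by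
    intro t ht
    have h := hφ_mem t ht
    have h2 := hφ_le t ht
    exact ⟨by linarith [h.1], by linarith⟩
  have hψd : ∀ t ∈ Icc (0:ℝ) M, HasDerivAt ψ (ξ.xi2 (φ t) * (qbar / (c + M))) t := by
    intro t ht
    exact (ξ.hasDerivAt_xi1 (hφ_Ioo t ht)).comp t (hφd t)
  refine ⟨?_, ?_, ?_, hψfix, ?_, ?_⟩
  · intro t ht
    refine ⟨ξ.xi1_nonneg (hφ_mem t ht), ?_⟩
    exact ξ.xi1_monotone (hφ_mem t ht) hqIcc (hφ_le t ht)
  · intro t1 h1 t2 h2 h12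
    exact ξ.xi1_strictMono (hφ_mem t1 h1) (hφ_mem t2 h2) (hφ_mono h1.1 h12)
  · refine ⟨convex_Icc _ _, fun x hx y hy a b ha hb hab => ?_⟩
    simp only [smul_eq_mul]
    have hφaff : φ (a * x + b * y) = a * φ x + b * φ y := by
      rw [hφeq, hφeq, hφeq]
      field_simp
      linear_combination (-c) * hab
    show ξ.xi1 (φ (a * x + b * y)) ≤ a * ξ.xi1 (φ x) + b * ξ.xi1 (φ y)
    rw [hφaff]
    have := ξ.xi1_convex.2 (hφ_mem x hx) (hφ_mem y hy) ha hb hab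
    simpa using this
  · have h := (hψd M (right_mem_Icc.2 hM0))
    rw [hφM] at h
    rw [hval] at h
    exact h
  · intro t ht
    obtain ⟨ht0, htM⟩ := ht
    have h3 : ∃ p, 3 ≤ p ∧ ξ.coeff p ≠ 0 := by
      by_contra hcon
      push_neg at hcon
      have h1 : ξ.xi1 qbar = 2 * ξ.coeff 2 * qbar := by
        rw [MixtureFunction.xi1, tsum_eq_single 2 ?_]
        · norm_num
        · intro p hp
          match p, hp with
          | 0, _ => simp
          | 1, _ => simp [ξ.coeff_one]
          | (n+3), _ => simp [hcon (n+3) (by omega)]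
      have h2 : ξ.xi2 qbar = 2 * ξ.coeff 2 := by
        rw [MixtureFunction.xi2, tsum_eq_single 2 ?_]
        · norm_num
        · intro p hp
          match p, hp with
          | 0, _ => simp
          | 1, _ => norm_num
          | (n+3), _ => simp [hcon (n+3) (by omega)]
      rw [hMdef, h1, h2] at hfix
      nlinarith
    set F : ℝ → ℝ := fun s => ψ s - s with hF
    have hFd : ∀ s ∈ Icc (0:ℝ) M, HasDerivAt F (ξ.xi2 (φ s) * (qbar / (c + M)) - 1) s := by
      intro s hs
      exact (hψd s hs).sub (hasDerivAt_id s)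
    have hanti : StrictAntiOn F (Icc (0:ℝ) M) := by
      apply strictAntiOn_of_deriv_neg (convex_Icc 0 M)
      · exact fun s hs => ((hFd s hs).continuousAt).continuousWithinAt
      · intro s hs
        rw [interior_Icc] at hs
        rw [(hFd s ⟨hs.1.le, hs.2.le⟩).deriv]
        have hsq : φ s < qbar := by
          have := hφ_mono hs.1.le hs.2
          rwa [hφM] at this
        have hlt2 : ξ.xi2 (φ s) < ξ.xi2 qbar :=
          ξ.xi2_strictMono h3 (hφ_mem s ⟨hs.1.le, hs.2.le⟩) hqIcc hsq
        have hpos : 0 < qbar / (c + M) := div_pos hq0 hD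
        nlinarith [hval]
    have hFM : F M = 0 := by simp [hF, hψfix]
    have := hanti ⟨ht0, htM.le⟩ (right_mem_Icc.2 hM0) htM
    rw [hFM] at this
    have : 0 < ψ t - t := this
    linarith
end

section
/- Let ξ be a mixture function, let c>0 satisfy c+ξ'(1)<ξ''(1), and let q̄∈(0,1) be the unique solution of c+ξ'(q̄)=q̄·ξ''(q̄). Let α:[0,1]→[0,∞) be nondecreasing with ∫₀¹α(r)dr<∞, set a(q)=∫₀^q α(r)dr, and let L∈ℝ satisfy L>∫₀¹α(r)dr. Suppose equality holds: (c+ξ'(1))·L − ∫₀¹ ξ''(q)·a(q) dq + ∫₀¹ (L−a(q))^{-1} dq = 2q̄·√(ξ''(q̄)) + 2∫_{q̄}^1 √(ξ''(q)) dq. Then a(q)=0 for all q∈[0,q̄] (equivalently α vanishes almost everywhere on [0,q̄)), L=ξ''(q̄)^{-1/2}, L−a(q)=ξ''(q)^{-1/2} for all q∈[q̄,1], and consequently the map q↦ξ''(q)^{-1/2} is concave on [q̄,1]. -/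
open Set Filter MeasureTheory

set_option linter.unusedVariables false

namespace MixtureFunction

variable (ξ : MixtureFunction)

lemma abs_aux (p : ℕ) : |(p : ℝ) * ((p : ℝ) - 1)| ≤ (p : ℝ) ^ 2 := by
  rcases Nat.eq_zero_or_pos p with h | h
  · subst h; norm_num
  · have h1 : (1 : ℝ) ≤ p := by exact_mod_cast h
    rw [abs_of_nonneg (by nlinarith)]
    nlinarith

lemma summable_sq : Summable (fun p : ℕ => (p : ℝ) ^ 2 * ξ.coeff p) := by
  obtain ⟨C, r, hC, hr0, hr1, hle⟩ := ξ.coeff_decay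
  have h : Summable fun p : ℕ => (p : ℝ) ^ 2 * r ^ p :=
    summable_pow_mul_geometric_of_norm_lt_one 2
      (by rw [Real.norm_eq_abs, abs_of_pos hr0]; exact hr1)
  refine Summable.of_nonneg_of_le (fun p => mul_nonneg (by positivity) (ξ.coeff_nonneg p)) (fun p => ?_) (h.mul_left C)
  calc (p : ℝ) ^ 2 * ξ.coeff p ≤ (p : ℝ) ^ 2 * (C * r ^ p) :=
        mul_le_mul_of_nonneg_left (hle p) (by positivity)
    _ = C * ((p : ℝ) ^ 2 * r ^ p) := by ring

lemma norm_term2_le (p : ℕ) {x : ℝ} (hx : |x| ≤ 1) :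
    ‖(p : ℝ) * ((p : ℝ) - 1) * ξ.coeff p * x ^ (p - 2)‖ ≤ (p : ℝ) ^ 2 * ξ.coeff p := by
  have h1 : |x ^ (p - 2)| ≤ 1 := by
    rw [abs_pow]; exact pow_le_one₀ (abs_nonneg x) hx
  have h2 := abs_aux p
  have h3 := ξ.coeff_nonneg p
  rw [Real.norm_eq_abs, abs_mul, abs_mul, abs_of_nonneg h3]
  calc |(p:ℝ) * ((p:ℝ)-1)| * ξ.coeff p * |x ^ (p-2)|
      ≤ |(p:ℝ) * ((p:ℝ)-1)| * ξ.coeff p * 1 := by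
        apply mul_le_mul_of_nonneg_left h1 (by positivity)
    _ = |(p:ℝ) * ((p:ℝ)-1)| * ξ.coeff p := by ring
    _ ≤ (p:ℝ)^2 * ξ.coeff p := mul_le_mul_of_nonneg_right h2 h3

lemma norm_term1_le (p : ℕ) {x : ℝ} (hx : |x| ≤ 1) :
    ‖(p : ℝ) * ξ.coeff p * x ^ (p - 1)‖ ≤ (p : ℝ) ^ 2 * ξ.coeff p := by
  have h1 : |x ^ (p - 1)| ≤ 1 := by
    rw [abs_pow]; exact pow_le_one₀ (abs_nonneg x) hx
  have h3 := ξ.coeff_nonneg p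
  have h2 : (p : ℝ) ≤ (p : ℝ) ^ 2 := by
    rcases Nat.eq_zero_or_pos p with h | h
    · subst h; norm_num
    · have h1 : (1 : ℝ) ≤ p := by exact_mod_cast h
      nlinarith
  rw [Real.norm_eq_abs, abs_mul, abs_mul, abs_of_nonneg h3,
    abs_of_nonneg (by positivity : (0:ℝ) ≤ (p:ℝ))]
  calc (p:ℝ) * ξ.coeff p * |x ^ (p-1)| ≤ (p:ℝ) * ξ.coeff p * 1 := by
        apply mul_le_mul_of_nonneg_left h1 (by positivity)
    _ = (p:ℝ) * ξ.coeff p := by ring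
    _ ≤ (p:ℝ)^2 * ξ.coeff p := mul_le_mul_of_nonneg_right h2 h3

lemma summable_term2 {x : ℝ} (hx : |x| ≤ 1) :
    Summable (fun p : ℕ => (p : ℝ) * ((p : ℝ) - 1) * ξ.coeff p * x ^ (p - 2)) :=
  Summable.of_norm_bounded ξ.summable_sq (fun p => ξ.norm_term2_le p hx)

lemma summable_term1 {x : ℝ} (hx : |x| ≤ 1) :
    Summable (fun p : ℕ => (p : ℝ) * ξ.coeff p * x ^ (p - 1)) :=
  Summable.of_norm_bounded ξ.summable_sq (fun p => ξ.norm_term1_le p hx)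

lemma term2_nonneg (p : ℕ) {x : ℝ} (hx : 0 ≤ x) :
    0 ≤ (p : ℝ) * ((p : ℝ) - 1) * ξ.coeff p * x ^ (p - 2) := by
  rcases Nat.eq_zero_or_pos p with h | h
  · subst h; norm_num
  · have h1 : (1 : ℝ) ≤ p := by exact_mod_cast h
    have := ξ.coeff_nonneg p
    have h2 : (0:ℝ) ≤ (p:ℝ) - 1 := by linarith
    have h3 := ξ.coeff_nonneg p
    positivity

lemma xi1_nonneg_s7 {x : ℝ} (hx : 0 ≤ x) : 0 ≤ ξ.xi1 x := by
  refine tsum_nonneg fun p => ?_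
  rcases Nat.eq_zero_or_pos p with h | h
  · subst h; norm_num
  · have := ξ.coeff_nonneg p
    positivity

lemma xi2_nonneg {x : ℝ} (hx : 0 ≤ x) : 0 ≤ ξ.xi2 x :=
  tsum_nonneg fun p => ξ.term2_nonneg p hx

lemma xi2_mono {x y : ℝ} (hx : 0 ≤ x) (hxy : x ≤ y) (hy : y ≤ 1) :
    ξ.xi2 x ≤ ξ.xi2 y := by
  refine Summable.tsum_le_tsum (fun p => ?_)
    (ξ.summable_term2 (by rw [abs_of_nonneg hx]; linarith))
    (ξ.summable_term2 (by rw [abs_of_nonneg (le_trans hx hxy)]; linarith))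
  have hco : 0 ≤ (p : ℝ) * ((p : ℝ) - 1) * ξ.coeff p := by
    rcases Nat.eq_zero_or_pos p with h | h
    · subst h; norm_num
    · have h1 : (1 : ℝ) ≤ p := by exact_mod_cast h
      have h2 : (0:ℝ) ≤ (p:ℝ) - 1 := by linarith
      have h3 := ξ.coeff_nonneg p
      positivity
  exact mul_le_mul_of_nonneg_left (pow_le_pow_left₀ hx hxy _) hco

lemma xi2_contOn : ContinuousOn ξ.xi2 (Icc 0 1) := by
  refine continuousOn_tsum (fun p => ?_) ξ.summable_sq (fun p x hx => ?_)
  · exact (continuous_const.mul (continuous_pow _)).continuousOn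
  · exact ξ.norm_term2_le p (by rw [abs_of_nonneg hx.1]; exact hx.2)


lemma integral_xi2 {x : ℝ} (hx : x ∈ Icc (0:ℝ) 1) :
    ∫ q in (0:ℝ)..x, ξ.xi2 q = ξ.xi1 x := by
  have hx0 : (0:ℝ) ≤ x := hx.1
  have hx1 : x ≤ 1 := hx.2
  rw [intervalIntegral.integral_of_le hx0]
  have key := MeasureTheory.integral_tsum_of_summable_integral_norm
    (μ := volume.restrict (Ioc 0 x))
    (F := fun (p : ℕ) (q : ℝ) => (p:ℝ) * ((p:ℝ) - 1) * ξ.coeff p * q ^ (p - 2)) ?_ ?_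
  · rw [show (fun q => ξ.xi2 q) = fun q => ∑' p : ℕ, (p:ℝ) * ((p:ℝ)-1) * ξ.coeff p * q ^ (p-2) from rfl]
    rw [← key]
    have hterm : ∀ p : ℕ,
        (∫ q in Ioc (0:ℝ) x, (p:ℝ) * ((p:ℝ) - 1) * ξ.coeff p * q ^ (p - 2)) =
          (p:ℝ) * ξ.coeff p * x ^ (p - 1) := by
      intro p
      rw [← intervalIntegral.integral_of_le hx0, intervalIntegral.integral_const_mul,
        integral_pow]
      match p with
      | 0 => norm_num
      | 1 => simp [ξ.coeff_one]
      | (n+2) =>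
        have h2 : (n + 2) - 2 = n := by omega
        have h1 : (n + 2) - 1 = n + 1 := by omega
        rw [h2, h1]
        have hn : ((n:ℝ) + 1) ≠ 0 := by positivity
        push_cast
        field_simp
        ring
    calc (∑' p : ℕ, ∫ q in Ioc (0:ℝ) x, (p:ℝ) * ((p:ℝ) - 1) * ξ.coeff p * q ^ (p - 2))
        = ∑' p : ℕ, (p:ℝ) * ξ.coeff p * x ^ (p - 1) := tsum_congr hterm
      _ = ξ.xi1 x := rfl
  · intro p
    exact (Continuous.integrableOn_Ioc (by fun_prop))
  · refine Summable.of_nonneg_of_le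
      (fun p => integral_nonneg (fun q => norm_nonneg _)) (fun p => ?_) ξ.summable_sq
    have hb : ∀ q ∈ Ioc (0:ℝ) x,
        ‖‖(p:ℝ) * ((p:ℝ) - 1) * ξ.coeff p * q ^ (p - 2)‖‖ ≤ (p:ℝ)^2 * ξ.coeff p := by
      intro q hq
      rw [norm_norm]
      exact ξ.norm_term2_le p (by rw [abs_of_nonneg hq.1.le]; exact le_trans hq.2 hx1)
    have := MeasureTheory.norm_setIntegral_le_of_norm_le_const
      (μ := volume) (s := Ioc (0:ℝ) x) (C := (p:ℝ)^2 * ξ.coeff p)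
      measure_Ioc_lt_top hb
    have hmeas : (volume (Ioc (0:ℝ) x)).toReal = x := by
      rw [Real.volume_Ioc]
      simp [hx0, ENNReal.toReal_ofReal, sub_zero]
    rw [measureReal_def, hmeas] at this
    have h2 : (0:ℝ) ≤ (p:ℝ)^2 * ξ.coeff p := mul_nonneg (by positivity) (ξ.coeff_nonneg p)
    calc (∫ q in Ioc (0:ℝ) x, ‖(p:ℝ) * ((p:ℝ) - 1) * ξ.coeff p * q ^ (p - 2)‖)
        ≤ ‖∫ q in Ioc (0:ℝ) x, ‖(p:ℝ) * ((p:ℝ) - 1) * ξ.coeff p * q ^ (p - 2)‖‖ :=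
          le_abs_self _
      _ ≤ (p:ℝ)^2 * ξ.coeff p * x := this
      _ ≤ (p:ℝ)^2 * ξ.coeff p * 1 := by nlinarith
      _ = (p:ℝ)^2 * ξ.coeff p := by ring

end MixtureFunction


lemma eq_zero_of_nonneg_of_integral_eq_zero' {F : ℝ → ℝ} {A B : ℝ} (hAB : A < B)
    (hcont : ContinuousOn F (Icc A B)) (hnn : ∀ x ∈ Icc A B, 0 ≤ F x)
    (hzero : (∫ x in A..B, F x) = 0) : ∀ x ∈ Icc A B, F x = 0 := by
  by_contra h
  push_neg at h
  obtain ⟨x₀, hx₀, hFx₀⟩ := h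
  have hpos : 0 < F x₀ := lt_of_le_of_ne (hnn _ hx₀) (Ne.symm hFx₀)
  have hFi : ∀ u v : ℝ, A ≤ u → u ≤ v → v ≤ B → IntervalIntegrable F volume u v := by
    intro u v h1 h2 h3
    apply ContinuousOn.intervalIntegrable
    rw [uIcc_of_le h2]
    exact hcont.mono (Icc_subset_Icc h1 h3)
  have hev : ∀ᶠ y in nhdsWithin x₀ (Icc A B), F x₀ / 2 < F y :=
    (hcont x₀ hx₀).eventually (eventually_gt_nhds (by linarith))
  have hev' : {y | F x₀ / 2 < F y} ∈ nhdsWithin x₀ (Icc A B) := hev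
  rw [Metric.mem_nhdsWithin_iff] at hev'
  obtain ⟨ε, hε, hball⟩ := hev'
  set u := max A (x₀ - ε / 2) with hu
  set v := min B (x₀ + ε / 2) with hv
  have hAu : A ≤ u := le_max_left _ _
  have hvB : v ≤ B := min_le_left _ _
  have huv : u < v :=
    max_lt (lt_min hAB (by linarith [hx₀.1])) (lt_min (by linarith [hx₀.2]) (by linarith))
  have hall : ∀ y ∈ Icc u v, F x₀ / 2 ≤ F y := by
    intro y hy
    have h1 : y ∈ Icc A B := ⟨le_trans hAu hy.1, le_trans hy.2 hvB⟩
    have h2 : y ≤ x₀ + ε / 2 := le_trans hy.2 (min_le_right _ _)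
    have h3 : x₀ - ε / 2 ≤ y := le_trans (le_max_right _ _) hy.1
    have hmem : y ∈ Metric.ball x₀ ε ∩ Icc A B := by
      refine ⟨Metric.mem_ball.mpr ?_, h1⟩
      rw [Real.dist_eq, abs_sub_lt_iff]
      constructor <;> linarith
    exact (hball hmem).le
  have hi2 : (v - u) * (F x₀ / 2) ≤ ∫ x in u..v, F x := by
    have h := intervalIntegral.integral_mono_on huv.le intervalIntegrable_const
      (hFi u v hAu huv.le hvB) hall
    simpa [intervalIntegral.integral_const, smul_eq_mul, mul_div_assoc] using h
  have hi1 : 0 ≤ ∫ x in A..u, F x :=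
    intervalIntegral.integral_nonneg hAu
      (fun y hy => hnn y ⟨hy.1, le_trans hy.2 (le_trans huv.le hvB)⟩)
  have hi3 : 0 ≤ ∫ x in v..B, F x :=
    intervalIntegral.integral_nonneg hvB
      (fun y hy => hnn y ⟨le_trans hAu (le_trans huv.le hy.1), hy.2⟩)
  have hs1 : (∫ x in A..u, F x) + (∫ x in u..v, F x) = ∫ x in A..v, F x :=
    intervalIntegral.integral_add_adjacent_intervals
      (hFi A u le_rfl hAu (le_trans huv.le hvB)) (hFi u v hAu huv.le hvB)
  have hs2 : (∫ x in A..v, F x) + (∫ x in v..B, F x) = ∫ x in A..B, F x :=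
    intervalIntegral.integral_add_adjacent_intervals
      (hFi A v le_rfl (le_trans hAu huv.le) hvB) (hFi v B (le_trans hAu huv.le) hvB le_rfl)
  have hposint : 0 < (v - u) * (F x₀ / 2) := mul_pos (by linarith) (by linarith)
  linarith

lemma primitive_convex_aux {α : ℝ → ℝ} (hα : MonotoneOn α (Icc 0 1))
    (hαint : IntervalIntegrable α volume 0 1)
    {x y w v : ℝ} (hx : x ∈ Icc (0:ℝ) 1) (hy : y ∈ Icc (0:ℝ) 1) (hxy : x ≤ y)
    (hw : 0 ≤ w) (hv : 0 ≤ v) (hwv : w + v = 1) :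
    (∫ r in (0:ℝ)..(w * x + v * y), α r)
      ≤ w * (∫ r in (0:ℝ)..x, α r) + v * (∫ r in (0:ℝ)..y, α r) := by
  have hsub : ∀ u u' : ℝ, u ∈ Icc (0:ℝ) 1 → u' ∈ Icc (0:ℝ) 1 →
      IntervalIntegrable α volume u u' := by
    intro u u' hu hu'
    refine hαint.mono_set (uIcc_subset_uIcc ?_ ?_) <;>
      rw [uIcc_of_le zero_le_one]
    exacts [hu, hu']
  set m := w * x + v * y with hm
  have hw1 : w = 1 - v := by linarith
  have hmx : m - x = v * (y - x) := by rw [hm, hw1]; ring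
  have hym : y - m = w * (y - x) := by rw [hm, hw1]; ring
  have hvyx : 0 ≤ v * (y - x) := mul_nonneg hv (by linarith)
  have hwyx : 0 ≤ w * (y - x) := mul_nonneg hw (by linarith)
  have hxm : x ≤ m := by linarith
  have hmy : m ≤ y := by linarith
  have hm01 : m ∈ Icc (0:ℝ) 1 := ⟨le_trans hx.1 hxm, le_trans hmy hy.2⟩
  have e1 : (∫ r in (0:ℝ)..x, α r) + (∫ r in x..m, α r) = ∫ r in (0:ℝ)..m, α r :=
    intervalIntegral.integral_add_adjacent_intervals
      (hsub 0 x (left_mem_Icc.mpr zero_le_one) hx) (hsub x m hx hm01)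
  have e2 : (∫ r in (0:ℝ)..m, α r) + (∫ r in m..y, α r) = ∫ r in (0:ℝ)..y, α r :=
    intervalIntegral.integral_add_adjacent_intervals
      (hsub 0 m (left_mem_Icc.mpr zero_le_one) hm01) (hsub m y hm01 hy)
  have b1 : (∫ r in x..m, α r) ≤ (m - x) * α m := by
    have h := intervalIntegral.integral_mono_on hxm (hsub x m hx hm01)
      intervalIntegrable_const
      (fun t ht => hα ⟨le_trans hx.1 ht.1, le_trans ht.2 hm01.2⟩ hm01 ht.2)
    simpa [intervalIntegral.integral_const, smul_eq_mul] using h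
  have b2 : (y - m) * α m ≤ ∫ r in m..y, α r := by
    have h := intervalIntegral.integral_mono_on hmy intervalIntegrable_const
      (hsub m y hm01 hy)
      (fun t ht => hα hm01 ⟨le_trans hm01.1 ht.1, le_trans ht.2 hy.2⟩ ht.1)
    simpa [intervalIntegral.integral_const, smul_eq_mul] using h
  have c1 : w * (∫ r in x..m, α r) ≤ w * (v * (y - x) * α m) :=
    mul_le_mul_of_nonneg_left (by rw [← hmx]; exact b1) hw
  have c2 : v * (w * (y - x) * α m) ≤ v * (∫ r in m..y, α r) :=
    mul_le_mul_of_nonneg_left (by rw [← hym]; exact b2) hv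
  have swap : w * (v * (y - x) * α m) = v * (w * (y - x) * α m) := by ring
  have d1 : w * (∫ r in (0:ℝ)..m, α r)
      = w * (∫ r in (0:ℝ)..x, α r) + w * (∫ r in x..m, α r) := by rw [← e1]; ring
  have d2 : v * (∫ r in (0:ℝ)..y, α r)
      = v * (∫ r in (0:ℝ)..m, α r) + v * (∫ r in m..y, α r) := by rw [← e2]; ring
  have d3 : w * (∫ r in (0:ℝ)..m, α r) + v * (∫ r in (0:ℝ)..m, α r)
      = ∫ r in (0:ℝ)..m, α r := by rw [← add_mul, hwv, one_mul]
  linarith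


/-- Equality case in the spherical ground-state lower bound: if equality holds in the
Crisanti–Sommers lower bound, then `a ≡ 0` on `[0,q̄]`, `L = ξ''(q̄)^{-1/2}`,
`L - a(q) = ξ''(q)^{-1/2}` on `[q̄,1]`, and `q ↦ ξ''(q)^{-1/2}` is concave on `[q̄,1]`. -/
theorem crisanti_sommers_equality_case (ξ : MixtureFunction) (c : ℝ) (hc : 0 < c)
    (hlt : c + ξ.xi1 1 < ξ.xi2 1)
    (qbar : ℝ) (hqbar : qbar ∈ Ioo (0 : ℝ) 1)
    (hfix : c + ξ.xi1 qbar = qbar * ξ.xi2 qbar)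
    (α : ℝ → ℝ) (hα0 : ∀ r ∈ Icc (0 : ℝ) 1, 0 ≤ α r)
    (hαmono : MonotoneOn α (Icc 0 1))
    (hαint : IntervalIntegrable α volume 0 1)
    (L : ℝ) (hL : (∫ r in (0 : ℝ)..1, α r) < L)
    (heq : (c + ξ.xi1 1) * L - (∫ q in (0 : ℝ)..1, ξ.xi2 q * (∫ r in (0 : ℝ)..q, α r))
        + (∫ q in (0 : ℝ)..1, (L - ∫ r in (0 : ℝ)..q, α r)⁻¹)
      = 2 * qbar * Real.sqrt (ξ.xi2 qbar) + 2 * (∫ q in qbar..1, Real.sqrt (ξ.xi2 q))) :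
    (∀ q ∈ Icc (0 : ℝ) qbar, (∫ r in (0 : ℝ)..q, α r) = 0) ∧
      L = (Real.sqrt (ξ.xi2 qbar))⁻¹ ∧
      (∀ q ∈ Icc qbar 1, L - (∫ r in (0 : ℝ)..q, α r) = (Real.sqrt (ξ.xi2 q))⁻¹) ∧
      ConcaveOn ℝ (Icc qbar 1) (fun q => (Real.sqrt (ξ.xi2 q))⁻¹) := by
  obtain ⟨hq0, hq1⟩ := hqbar
  set a : ℝ → ℝ := fun q => ∫ r in (0:ℝ)..q, α r with ha_def
  set b : ℝ → ℝ := fun q => L - a q with hb_def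
  set s : ℝ → ℝ := fun q => max (ξ.xi2 qbar) (ξ.xi2 q) with hs_def
  have hqmem : qbar ∈ Icc (0:ℝ) 1 := ⟨hq0.le, hq1.le⟩
  have h01 : (0:ℝ) ∈ Icc (0:ℝ) 1 := left_mem_Icc.mpr zero_le_one
  have h11 : (1:ℝ) ∈ Icc (0:ℝ) 1 := right_mem_Icc.mpr zero_le_one
  have hu01 : uIcc (0:ℝ) 1 = Icc 0 1 := uIcc_of_le zero_le_one
  have hu0q : uIcc (0:ℝ) qbar = Icc 0 qbar := uIcc_of_le hq0.le
  have huq1 : uIcc qbar 1 = Icc qbar 1 := uIcc_of_le hq1.le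
  have hαsub : ∀ u u' : ℝ, u ∈ Icc (0:ℝ) 1 → u' ∈ Icc (0:ℝ) 1 →
      IntervalIntegrable α volume u u' := by
    intro u u' hu hu'
    refine hαint.mono_set (uIcc_subset_uIcc ?_ ?_) <;> rw [hu01]
    exacts [hu, hu']
  have ha0 : a 0 = 0 := intervalIntegral.integral_same
  have hamono : ∀ u u' : ℝ, u ∈ Icc (0:ℝ) 1 → u' ∈ Icc (0:ℝ) 1 → u ≤ u' → a u ≤ a u' := by
    intro u u' hu hu' huu
    have h := intervalIntegral.integral_add_adjacent_intervals
      (hαsub 0 u h01 hu) (hαsub u u' hu hu')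
    have h2 : 0 ≤ ∫ r in u..u', α r :=
      intervalIntegral.integral_nonneg huu
        (fun t ht => hα0 t ⟨le_trans hu.1 ht.1, le_trans ht.2 hu'.2⟩)
    have h3 : a u + (∫ r in u..u', α r) = a u' := h
    linarith
  have ha_nonneg : ∀ q ∈ Icc (0:ℝ) 1, 0 ≤ a q := by
    intro q hq
    have := hamono 0 q h01 hq hq.1
    linarith [ha0]
  have hb_pos : ∀ q ∈ Icc (0:ℝ) 1, 0 < b q := by
    intro q hq
    have h1 : a q ≤ a 1 := hamono q 1 hq h11 hq.2
    have h2 : a 1 < L := hL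
    simp only [hb_def]
    linarith
  have ha_cont : ContinuousOn a (Icc 0 1) := by
    have h := intervalIntegral.continuousOn_primitive_interval' hαint
      (by rw [hu01]; exact h01)
    rwa [hu01] at h
  have hxi2qpos : 0 < ξ.xi2 qbar := by
    have h1 := ξ.xi1_nonneg_s7 hq0.le
    have h2 : 0 < qbar * ξ.xi2 qbar := by linarith
    by_contra h
    push_neg at h
    nlinarith
  have hs_pos : ∀ q : ℝ, 0 < s q := fun q => lt_of_lt_of_le hxi2qpos (le_max_left _ _)
  have hs_left : ∀ q ∈ Icc (0:ℝ) qbar, s q = ξ.xi2 qbar := fun q hq =>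
    max_eq_left (ξ.xi2_mono hq.1 hq.2 hq1.le)
  have hs_right : ∀ q ∈ Icc qbar 1, s q = ξ.xi2 q := fun q hq =>
    max_eq_right (ξ.xi2_mono hq0.le hq.1 hq.2)
  have hs_cont : ContinuousOn s (Icc 0 1) := ContinuousOn.sup continuousOn_const ξ.xi2_contOn
  have hb_cont : ContinuousOn b (Icc 0 1) := continuousOn_const.sub ha_cont
  have hsqrt_pos : ∀ q : ℝ, 0 < Real.sqrt (s q) := fun q => Real.sqrt_pos.mpr (hs_pos q)
  set F : ℝ → ℝ :=
    fun q => (b q - (Real.sqrt (s q))⁻¹) ^ 2 * s q / b q + (s q - ξ.xi2 q) * a q with hF_def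
  have hxile : ∀ q : ℝ, ξ.xi2 q ≤ s q := fun q => le_max_right _ _
  have hF_nonneg : ∀ q ∈ Icc (0:ℝ) 1, 0 ≤ F q := by
    intro q hq
    have h1 : 0 ≤ (b q - (Real.sqrt (s q))⁻¹) ^ 2 * s q / b q :=
      div_nonneg (mul_nonneg (sq_nonneg _) (hs_pos q).le) (hb_pos q hq).le
    have h2 : 0 ≤ (s q - ξ.xi2 q) * a q :=
      mul_nonneg (by linarith [hxile q]) (ha_nonneg q hq)
    simp only [hF_def]
    linarith
  have hsqrt_cont : ContinuousOn (fun q => Real.sqrt (s q)) (Icc 0 1) :=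
    Real.continuous_sqrt.comp_continuousOn hs_cont
  have hF_cont : ContinuousOn F (Icc 0 1) := by
    apply ContinuousOn.add
    · apply ContinuousOn.div
      · exact ((hb_cont.sub (hsqrt_cont.inv₀ fun q hq => (hsqrt_pos q).ne')).pow 2).mul hs_cont
      · exact hb_cont
      · exact fun q hq => (hb_pos q hq).ne'
    · exact (hs_cont.sub ξ.xi2_contOn).mul ha_cont
  have hF_point : ∀ q ∈ Icc (0:ℝ) 1,
      F q = s q * L - 2 * Real.sqrt (s q) + (b q)⁻¹ - ξ.xi2 q * a q := by
    intro q hq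
    have hbq := (hb_pos q hq).ne'
    have haq : a q = L - b q := by simp [hb_def]
    simp only [hF_def]
    set S := Real.sqrt (s q) with hSdef
    have hS : S ^ 2 = s q := Real.sq_sqrt (hs_pos q).le
    have hSne : S ≠ 0 := (hsqrt_pos q).ne'
    rw [haq, ← hS]
    field_simp
    ring
  have hIIcc : ∀ (g : ℝ → ℝ), ContinuousOn g (Icc 0 1) → ∀ u u' : ℝ,
      u ∈ Icc (0:ℝ) 1 → u' ∈ Icc (0:ℝ) 1 → u ≤ u' → IntervalIntegrable g volume u u' := by
    intro g hg u u' hu hu' huu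
    apply ContinuousOn.intervalIntegrable
    rw [uIcc_of_le huu]
    exact hg.mono (Icc_subset_Icc hu.1 hu'.2)
  have hbi_cont : ContinuousOn (fun q => (b q)⁻¹) (Icc 0 1) :=
    hb_cont.inv₀ fun q hq => (hb_pos q hq).ne'
  have hxia_cont : ContinuousOn (fun q => ξ.xi2 q * a q) (Icc 0 1) :=
    ξ.xi2_contOn.mul ha_cont
  have hsplit_xi2 : (∫ q in (0:ℝ)..qbar, ξ.xi2 q) + (∫ q in qbar..1, ξ.xi2 q)
      = ∫ q in (0:ℝ)..1, ξ.xi2 q :=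
    intervalIntegral.integral_add_adjacent_intervals
      (hIIcc _ ξ.xi2_contOn 0 qbar h01 hqmem hq0.le)
      (hIIcc _ ξ.xi2_contOn qbar 1 hqmem h11 hq1.le)
  have hInta : ∫ q in (0:ℝ)..qbar, ξ.xi2 q = ξ.xi1 qbar := ξ.integral_xi2 hqmem
  have hIntb : ∫ q in (0:ℝ)..1, ξ.xi2 q = ξ.xi1 1 := ξ.integral_xi2 h11
  have hIs1 : ∫ q in (0:ℝ)..qbar, s q = qbar * ξ.xi2 qbar := by
    rw [intervalIntegral.integral_congr (g := fun _ => ξ.xi2 qbar) (by rw [hu0q]; exact hs_left)]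
    simp [intervalIntegral.integral_const, smul_eq_mul]
  have hIs2 : ∫ q in qbar..1, s q = ξ.xi1 1 - ξ.xi1 qbar := by
    rw [intervalIntegral.integral_congr (g := ξ.xi2) (by rw [huq1]; exact hs_right)]
    linarith
  have hIs : ∫ q in (0:ℝ)..1, s q = c + ξ.xi1 1 := by
    have hsplit_s : (∫ q in (0:ℝ)..qbar, s q) + (∫ q in qbar..1, s q) = ∫ q in (0:ℝ)..1, s q :=
      intervalIntegral.integral_add_adjacent_intervals
        (hIIcc _ hs_cont 0 qbar h01 hqmem hq0.le)
        (hIIcc _ hs_cont qbar 1 hqmem h11 hq1.le)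
    rw [← hsplit_s, hIs1, hIs2]
    linarith
  have hIr1 : ∫ q in (0:ℝ)..qbar, Real.sqrt (s q) = qbar * Real.sqrt (ξ.xi2 qbar) := by
    rw [intervalIntegral.integral_congr (g := fun _ => Real.sqrt (ξ.xi2 qbar))
      (by rw [hu0q]; intro q hq; show Real.sqrt (s q) = Real.sqrt (ξ.xi2 qbar); rw [hs_left q hq])]
    simp [intervalIntegral.integral_const, smul_eq_mul]
  have hIr2 : ∫ q in qbar..1, Real.sqrt (s q) = ∫ q in qbar..1, Real.sqrt (ξ.xi2 q) :=
    intervalIntegral.integral_congr (by rw [huq1]; intro q hq; show Real.sqrt (s q) = Real.sqrt (ξ.xi2 q); rw [hs_right q hq])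
  have hIsqrt : ∫ q in (0:ℝ)..1, Real.sqrt (s q)
      = qbar * Real.sqrt (ξ.xi2 qbar) + ∫ q in qbar..1, Real.sqrt (ξ.xi2 q) := by
    rw [← intervalIntegral.integral_add_adjacent_intervals
      (hIIcc _ hsqrt_cont 0 qbar h01 hqmem hq0.le)
      (hIIcc _ hsqrt_cont qbar 1 hqmem h11 hq1.le), hIr1, hIr2]
  have hIF : ∫ q in (0:ℝ)..1, F q
      = L * (∫ q in (0:ℝ)..1, s q) - 2 * (∫ q in (0:ℝ)..1, Real.sqrt (s q))
        + (∫ q in (0:ℝ)..1, (b q)⁻¹) - (∫ q in (0:ℝ)..1, ξ.xi2 q * a q) := by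
    rw [intervalIntegral.integral_congr
      (g := fun q => s q * L - 2 * Real.sqrt (s q) + (b q)⁻¹ - ξ.xi2 q * a q)
      (by rw [hu01]; exact hF_point)]
    have i1 : IntervalIntegrable (fun q => s q * L) volume 0 1 :=
      (hIIcc _ hs_cont 0 1 h01 h11 zero_le_one).mul_const L
    have i2 : IntervalIntegrable (fun q => 2 * Real.sqrt (s q)) volume 0 1 :=
      (hIIcc _ hsqrt_cont 0 1 h01 h11 zero_le_one).const_mul 2
    have i3 : IntervalIntegrable (fun q => (b q)⁻¹) volume 0 1 :=
      hIIcc _ hbi_cont 0 1 h01 h11 zero_le_one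
    have i4 : IntervalIntegrable (fun q => ξ.xi2 q * a q) volume 0 1 :=
      hIIcc _ hxia_cont 0 1 h01 h11 zero_le_one
    rw [intervalIntegral.integral_sub ((i1.sub i2).add i3) i4,
      intervalIntegral.integral_add (i1.sub i2) i3,
      intervalIntegral.integral_sub i1 i2,
      intervalIntegral.integral_mul_const, intervalIntegral.integral_const_mul]
    ring
  have hIF0 : ∫ q in (0:ℝ)..1, F q = 0 := by
    have e1 : (∫ q in (0:ℝ)..1, ξ.xi2 q * a q)
        = ∫ q in (0:ℝ)..1, ξ.xi2 q * (∫ r in (0:ℝ)..q, α r) := by simp only [ha_def]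
    have e2 : (∫ q in (0:ℝ)..1, (b q)⁻¹)
        = ∫ q in (0:ℝ)..1, (L - ∫ r in (0:ℝ)..q, α r)⁻¹ := by simp only [hb_def, ha_def]
    rw [hIF, hIs, hIsqrt, e1, e2]
    linarith
  have hF0 : ∀ q ∈ Icc (0:ℝ) 1, F q = 0 :=
    eq_zero_of_nonneg_of_integral_eq_zero' zero_lt_one hF_cont hF_nonneg hIF0
  have hbt : ∀ q ∈ Icc (0:ℝ) 1, b q = (Real.sqrt (s q))⁻¹ := by
    intro q hq
    have hF := hF0 q hq
    simp only [hF_def] at hF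
    have h1 : 0 ≤ (b q - (Real.sqrt (s q))⁻¹) ^ 2 * s q / b q :=
      div_nonneg (mul_nonneg (sq_nonneg _) (hs_pos q).le) (hb_pos q hq).le
    have h2 : 0 ≤ (s q - ξ.xi2 q) * a q :=
      mul_nonneg (by linarith [hxile q]) (ha_nonneg q hq)
    have h3 : (b q - (Real.sqrt (s q))⁻¹) ^ 2 * s q / b q = 0 := by linarith
    have hbne := (hb_pos q hq).ne'
    have hsne := (hs_pos q).ne'
    have h4 : (b q - (Real.sqrt (s q))⁻¹) ^ 2
        = ((b q - (Real.sqrt (s q))⁻¹) ^ 2 * s q / b q) * (b q / s q) := by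
      field_simp
    rw [h3, zero_mul] at h4
    have h5 : b q - (Real.sqrt (s q))⁻¹ = 0 := by
      exact pow_eq_zero_iff (two_ne_zero) |>.mp h4
    linarith
  have hq0q : (0:ℝ) ∈ Icc (0:ℝ) qbar := ⟨le_rfl, hq0.le⟩
  have hLeq : L = (Real.sqrt (ξ.xi2 qbar))⁻¹ := by
    have h := hbt 0 h01
    rw [hs_left 0 hq0q] at h
    simp only [hb_def, ha_def, intervalIntegral.integral_same, sub_zero] at h
    exact h
  refine ⟨?_, hLeq, ?_, ?_⟩
  · intro q hq
    have hq01 : q ∈ Icc (0:ℝ) 1 := ⟨hq.1, le_trans hq.2 hq1.le⟩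
    have h := hbt q hq01
    rw [hs_left q hq] at h
    simp only [hb_def] at h
    have : a q = 0 := by linarith [hLeq]
    simpa only [ha_def] using this
  · intro q hq
    have hq01 : q ∈ Icc (0:ℝ) 1 := ⟨le_trans hq0.le hq.1, hq.2⟩
    have h := hbt q hq01
    rw [hs_right q hq] at h
    simp only [hb_def, ha_def] at h
    exact h
  · have hIccsub : Icc qbar 1 ⊆ Icc (0:ℝ) 1 := Icc_subset_Icc hq0.le le_rfl
    have hval : ∀ q ∈ Icc qbar 1, (Real.sqrt (ξ.xi2 q))⁻¹ = L - a q := by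
      intro q hq
      have h := hbt q (hIccsub hq)
      rw [hs_right q hq] at h
      simp only [hb_def] at h
      linarith
    refine ⟨convex_Icc _ _, ?_⟩
    intro x hx y hy w v hw hv hwv
    have hm : w • x + v • y ∈ Icc qbar 1 := (convex_Icc qbar 1) hx hy hw hv hwv
    simp only [smul_eq_mul] at hm ⊢
    rw [hval _ hx, hval _ hy, hval _ hm]
    have hx01 := hIccsub hx
    have hy01 := hIccsub hy
    have key : a (w * x + v * y) ≤ w * a x + v * a y := by
      rcases le_total x y with hxy | hxy
      · have h := primitive_convex_aux hαmono hαint hx01 hy01 hxy hw hv hwv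
        simpa only [ha_def] using h
      · have h := primitive_convex_aux hαmono hαint hy01 hx01 hxy hv hw (by linarith)
        have h2 : a (v * y + w * x) ≤ v * a y + w * a x := by simpa only [ha_def] using h
        have h3 : v * y + w * x = w * x + v * y := by ring
        rw [h3] at h2
        linarith
    have e : w * (L - a x) + v * (L - a y) = (w + v) * L - (w * a x + v * a y) := by ring
    rw [e, hwv, one_mul]
    linarith
end

section
/- Let ξ be a mixture function, let c>0 satisfy c+ξ'(1)<ξ''(1), and let q̄∈(0,1) be the unique solution of c+ξ'(q̄)=q̄·ξ''(q̄). Assume the map q↦ξ''(q)^{-1/2} is concave on [q̄,1]. Define L=ξ''(q̄)^{-1/2} and α(s)=0 for s∈[0,q̄), α(s)=ξ'''(s)/(2·ξ''(s)^{3/2}) for s∈[q̄,1], and set a(q)=∫₀^q α(r)dr. Then L>∫₀¹α(r)dr and equality holds in the ground-state lower bound: (c+ξ'(1))·L − ∫₀¹ ξ''(q)·a(q) dq + ∫₀¹ (L−a(q))^{-1} dq = 2q̄·√(ξ''(q̄)) + 2∫_{q̄}^1 √(ξ''(q)) dq. -/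
open Set Filter MeasureTheory

private lemma term_hasDerivAt1 (co : ℝ) (p : ℕ) (y : ℝ) :
    HasDerivAt (fun z : ℝ => (p : ℝ) * co * z ^ (p - 1))
      ((p : ℝ) * ((p : ℝ) - 1) * co * y ^ (p - 2)) y := by
  match p with
  | 0 => simpa using hasDerivAt_const y (0 : ℝ)
  | 1 => simpa using hasDerivAt_const y ((1 : ℝ) * co)
  | (n + 2) =>
    have h := (hasDerivAt_pow (n + 1) y).const_mul (((n : ℝ) + 2) * co)
    convert h using 1
    · rfl
    · rfl
    · funext z
      simp only [show n + 2 - 1 = n + 1 from rfl]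
      push_cast
      ring
    · simp only [show n + 2 - 2 = n from rfl, show n + 1 - 1 = n from rfl]
      push_cast
      ring

private lemma term_hasDerivAt2 (co : ℝ) (p : ℕ) (y : ℝ) :
    HasDerivAt (fun z : ℝ => (p : ℝ) * ((p : ℝ) - 1) * co * z ^ (p - 2))
      ((p : ℝ) * ((p : ℝ) - 1) * ((p : ℝ) - 2) * co * y ^ (p - 3)) y := by
  match p with
  | 0 => simpa using hasDerivAt_const y (0 : ℝ)
  | 1 => simpa using hasDerivAt_const y ((1 : ℝ) * ((1 : ℝ) - 1) * co)
  | 2 => simpa using hasDerivAt_const y ((2 : ℝ) * ((2 : ℝ) - 1) * co)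
  | (n + 3) =>
    have h := (hasDerivAt_pow (n + 1) y).const_mul ((((n : ℝ) + 3) * (((n : ℝ) + 3) - 1)) * co)
    convert h using 1
    · rfl
    · rfl
    · funext z
      simp only [show n + 3 - 2 = n + 1 from rfl]
      push_cast
      ring
    · simp only [show n + 3 - 3 = n from rfl, show n + 1 - 1 = n from rfl]
      push_cast
      ring

private lemma term_hasDerivAt3 (co : ℝ) (p : ℕ) (y : ℝ) :
    HasDerivAt (fun z : ℝ => (p : ℝ) * ((p : ℝ) - 1) * ((p : ℝ) - 2) * co * z ^ (p - 3))
      ((p : ℝ) * ((p : ℝ) - 1) * ((p : ℝ) - 2) * ((p : ℝ) - 3) * co * y ^ (p - 4)) y := by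
  match p with
  | 0 => simpa using hasDerivAt_const y (0 : ℝ)
  | 1 => simpa using hasDerivAt_const y ((1 : ℝ) * ((1 : ℝ) - 1) * ((1 : ℝ) - 2) * co)
  | 2 => simpa using hasDerivAt_const y ((2 : ℝ) * ((2 : ℝ) - 1) * ((2 : ℝ) - 2) * co)
  | 3 => simpa using hasDerivAt_const y ((3 : ℝ) * ((3 : ℝ) - 1) * ((3 : ℝ) - 2) * co)
  | (n + 4) =>
    have h := (hasDerivAt_pow (n + 1) y).const_mul
      ((((n : ℝ) + 4) * (((n : ℝ) + 4) - 1) * (((n : ℝ) + 4) - 2)) * co)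
    convert h using 1
    · rfl
    · rfl
    · funext z
      simp only [show n + 4 - 3 = n + 1 from rfl]
      push_cast
      ring
    · simp only [show n + 4 - 4 = n from rfl, show n + 1 - 1 = n from rfl]
      push_cast
      ring

private lemma abs_prod_le (p : ℕ) :
    |(p : ℝ)| ≤ ((p : ℝ) + 3) ^ 4 ∧ |(p : ℝ) * ((p : ℝ) - 1)| ≤ ((p : ℝ) + 3) ^ 4 ∧
      |(p : ℝ) * ((p : ℝ) - 1) * ((p : ℝ) - 2)| ≤ ((p : ℝ) + 3) ^ 4 ∧
      |(p : ℝ) * ((p : ℝ) - 1) * ((p : ℝ) - 2) * ((p : ℝ) - 3)| ≤ ((p : ℝ) + 3) ^ 4 := by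
  have hp : (0 : ℝ) ≤ p := Nat.cast_nonneg p
  have h0 : |(p : ℝ)| ≤ (p : ℝ) + 3 := by rw [abs_le]; constructor <;> linarith
  have h1 : |(p : ℝ) - 1| ≤ (p : ℝ) + 3 := by rw [abs_le]; constructor <;> linarith
  have h2 : |(p : ℝ) - 2| ≤ (p : ℝ) + 3 := by rw [abs_le]; constructor <;> linarith
  have h3 : |(p : ℝ) - 3| ≤ (p : ℝ) + 3 := by rw [abs_le]; constructor <;> linarith
  have ht : (1 : ℝ) ≤ (p : ℝ) + 3 := by linarith
  have ht0 : (0 : ℝ) ≤ (p : ℝ) + 3 := by linarith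
  refine ⟨?_, ?_, ?_, ?_⟩
  · calc |(p : ℝ)| ≤ (p : ℝ) + 3 := h0
      _ ≤ ((p : ℝ) + 3) ^ 4 := le_self_pow₀ ht (by norm_num)
  · calc |(p : ℝ) * ((p : ℝ) - 1)| = |(p : ℝ)| * |(p : ℝ) - 1| := abs_mul _ _
      _ ≤ ((p : ℝ) + 3) * ((p : ℝ) + 3) := mul_le_mul h0 h1 (abs_nonneg _) ht0
      _ = ((p : ℝ) + 3) ^ 2 := (sq _).symm
      _ ≤ ((p : ℝ) + 3) ^ 4 := pow_le_pow_right₀ ht (by norm_num)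
  · calc |(p : ℝ) * ((p : ℝ) - 1) * ((p : ℝ) - 2)|
        = |(p : ℝ)| * |(p : ℝ) - 1| * |(p : ℝ) - 2| := by rw [abs_mul, abs_mul]
      _ ≤ ((p : ℝ) + 3) * ((p : ℝ) + 3) * ((p : ℝ) + 3) :=
          mul_le_mul (mul_le_mul h0 h1 (abs_nonneg _) ht0) h2 (abs_nonneg _) (by positivity)
      _ = ((p : ℝ) + 3) ^ 3 := by ring
      _ ≤ ((p : ℝ) + 3) ^ 4 := pow_le_pow_right₀ ht (by norm_num)
  · calc |(p : ℝ) * ((p : ℝ) - 1) * ((p : ℝ) - 2) * ((p : ℝ) - 3)|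
        = |(p : ℝ)| * |(p : ℝ) - 1| * |(p : ℝ) - 2| * |(p : ℝ) - 3| := by
          rw [abs_mul, abs_mul, abs_mul]
      _ ≤ ((p : ℝ) + 3) * ((p : ℝ) + 3) * ((p : ℝ) + 3) * ((p : ℝ) + 3) :=
          mul_le_mul (mul_le_mul (mul_le_mul h0 h1 (abs_nonneg _) ht0) h2 (abs_nonneg _)
            (by positivity)) h3 (abs_nonneg _) (by positivity)
      _ = ((p : ℝ) + 3) ^ 4 := by ring

private lemma MixtureFunction.setup (ξ : MixtureFunction) :
    ∃ b : ℝ, 1 < b ∧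
      (∀ y ∈ Ioo (-b) b, HasDerivAt ξ.xi1 (ξ.xi2 y) y) ∧
      (∀ y ∈ Ioo (-b) b, HasDerivAt ξ.xi2 (ξ.xi3 y) y) ∧
      (∀ y ∈ Ioo (-b) b, ContinuousAt ξ.xi3 y) ∧
      (∀ y ∈ Ioo (-b) b,
        Summable (fun p : ℕ => (p : ℝ) * ((p : ℝ) - 1) * ξ.coeff p * y ^ (p - 2))) := by
  obtain ⟨C, r, hC, hr0, hr1, hcb⟩ := ξ.coeff_decay
  have hrinv : 1 < r⁻¹ := one_lt_inv₀ hr0 |>.mpr hr1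
  set b : ℝ := (1 + r⁻¹) / 2 with hbdef
  have hb1 : 1 < b := by rw [hbdef]; linarith
  have hb0 : 0 < b := lt_trans one_pos hb1
  have hrb : r * b < 1 := by
    have h : r * b = (r + 1) / 2 := by
      rw [hbdef]; field_simp
    rw [h]; linarith
  have hrb0 : 0 ≤ r * b := le_of_lt (mul_pos hr0 hb0)
  have hρnorm : ‖r * b‖ < 1 := by rw [Real.norm_eq_abs, abs_of_nonneg hrb0]; exact hrb
  have hk : ∀ k : ℕ, Summable (fun p : ℕ => (p : ℝ) ^ k * (r * b) ^ p) := fun k =>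
    summable_pow_mul_geometric_of_norm_lt_one k hρnorm
  have hsum0 : Summable (fun p : ℕ => ((p : ℝ) + 3) ^ 4 * (r * b) ^ p) := by
    have h := ((hk 4).add ((hk 3).mul_left 12)).add
      (((hk 2).mul_left 54).add (((hk 1).mul_left 108).add ((hk 0).mul_left 81)))
    refine h.congr fun p => ?_
    ring
  have hu : Summable (fun p : ℕ => C * b ^ 4 * (((p : ℝ) + 3) ^ 4 * (r * b) ^ p)) :=
    hsum0.mul_left _
  have key : ∀ (p k : ℕ) (B : ℝ), |B| ≤ ((p : ℝ) + 3) ^ 4 → ∀ y ∈ Ioo (-b) b,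
      ‖B * ξ.coeff p * y ^ (p - k)‖ ≤ C * b ^ 4 * (((p : ℝ) + 3) ^ 4 * (r * b) ^ p) := by
    intro p k B hB y hy
    have hyb : |y| ≤ b := by rw [abs_le]; exact ⟨le_of_lt hy.1, le_of_lt hy.2⟩
    have hcp := ξ.coeff_nonneg p
    have h1 : ‖B * ξ.coeff p * y ^ (p - k)‖ = |B| * ξ.coeff p * |y| ^ (p - k) := by
      rw [norm_mul, norm_mul, norm_pow, Real.norm_eq_abs, Real.norm_eq_abs, Real.norm_eq_abs,
        abs_of_nonneg hcp]
    rw [h1]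
    have h2 : |y| ^ (p - k) ≤ b ^ (p + 4) := by
      calc |y| ^ (p - k) ≤ b ^ (p - k) := pow_le_pow_left₀ (abs_nonneg y) hyb _
        _ ≤ b ^ (p + 4) := pow_le_pow_right₀ (le_of_lt hb1) (by omega)
    calc |B| * ξ.coeff p * |y| ^ (p - k)
        ≤ ((p : ℝ) + 3) ^ 4 * (C * r ^ p) * b ^ (p + 4) := by
          apply mul_le_mul (mul_le_mul hB (hcb p) hcp (by positivity)) h2 (by positivity)
            (by positivity)
      _ = C * b ^ 4 * (((p : ℝ) + 3) ^ 4 * (r * b) ^ p) := by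
          rw [mul_pow, pow_add]; ring
  have hz : ∀ k : ℕ, 1 ≤ k → ∀ A : ℕ → ℝ,
      Summable (fun p : ℕ => A p * (0 : ℝ) ^ (p - k)) := by
    intro k hk1 A
    apply summable_of_ne_finset_zero (s := Finset.range (k + 1))
    intro p hp
    simp only [Finset.mem_range, not_lt] at hp
    rw [zero_pow (by omega : p - k ≠ 0), mul_zero]
  have hopen : IsOpen (Ioo (-b) b) := isOpen_Ioo
  have hpre : IsPreconnected (Ioo (-b) b) := (convex_Ioo _ _).isPreconnected
  have h0mem : (0 : ℝ) ∈ Ioo (-b) b := ⟨by linarith, by linarith⟩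
  refine ⟨b, hb1, ?_, ?_, ?_, ?_⟩
  · intro y hy
    exact hasDerivAt_tsum_of_isPreconnected hu hopen hpre
      (fun p z _ => term_hasDerivAt1 (ξ.coeff p) p z)
      (fun p z hz' => key p 2 ((p : ℝ) * ((p : ℝ) - 1)) (abs_prod_le p).2.1 z hz')
      h0mem (hz 1 le_rfl (fun p => (p : ℝ) * ξ.coeff p)) hy
  · intro y hy
    exact hasDerivAt_tsum_of_isPreconnected hu hopen hpre
      (fun p z _ => term_hasDerivAt2 (ξ.coeff p) p z)
      (fun p z hz' => key p 3 ((p : ℝ) * ((p : ℝ) - 1) * ((p : ℝ) - 2)) (abs_prod_le p).2.2.1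
        z hz')
      h0mem (hz 2 one_le_two (fun p => (p : ℝ) * ((p : ℝ) - 1) * ξ.coeff p)) hy
  · intro y hy
    have h : HasDerivAt ξ.xi3
        (∑' p : ℕ, (p : ℝ) * ((p : ℝ) - 1) * ((p : ℝ) - 2) * ((p : ℝ) - 3) * ξ.coeff p
          * y ^ (p - 4)) y :=
      hasDerivAt_tsum_of_isPreconnected hu hopen hpre
        (fun p z _ => term_hasDerivAt3 (ξ.coeff p) p z)
        (fun p z hz' => key p 4 ((p : ℝ) * ((p : ℝ) - 1) * ((p : ℝ) - 2) * ((p : ℝ) - 3))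
          (abs_prod_le p).2.2.2 z hz')
        h0mem (hz 3 (by norm_num) (fun p => (p : ℝ) * ((p : ℝ) - 1) * ((p : ℝ) - 2) * ξ.coeff p))
        hy
    exact h.continuousAt
  · intro y hy
    exact Summable.of_norm_bounded hu
      (fun p => key p 2 ((p : ℝ) * ((p : ℝ) - 1)) (abs_prod_le p).2.1 y hy)

/-- When `q ↦ ξ''(q)^{-1/2}` is concave on `[q̄,1]`, the explicit no-overlap-gap order
parameter `L = ξ''(q̄)^{-1/2}`, `α = 0` on `[0,q̄)` and `α(s) = ξ'''(s)/(2 ξ''(s)^{3/2})` on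
`[q̄,1]` is admissible (`L > ∫₀¹ α`) and attains equality in the Crisanti–Sommers
ground-state lower bound. -/
theorem crisanti_sommers_equality_attained (ξ : MixtureFunction) (c : ℝ) (hc : 0 < c)
    (hlt : c + ξ.xi1 1 < ξ.xi2 1)
    (qbar : ℝ) (hqbar : qbar ∈ Ioo (0 : ℝ) 1)
    (hfix : c + ξ.xi1 qbar = qbar * ξ.xi2 qbar)
    (hconc : ConcaveOn ℝ (Icc qbar 1) (fun q => (Real.sqrt (ξ.xi2 q))⁻¹)) :
    let L : ℝ := (Real.sqrt (ξ.xi2 qbar))⁻¹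
    let α : ℝ → ℝ := fun s => if s < qbar then 0 else ξ.xi3 s / (2 * ξ.xi2 s ^ ((3 : ℝ) / 2))
    let a : ℝ → ℝ := fun q => ∫ r in (0 : ℝ)..q, α r
    (∫ r in (0 : ℝ)..1, α r) < L ∧
      (c + ξ.xi1 1) * L - (∫ q in (0 : ℝ)..1, ξ.xi2 q * a q)
          + (∫ q in (0 : ℝ)..1, (L - a q)⁻¹)
        = 2 * qbar * Real.sqrt (ξ.xi2 qbar) + 2 * (∫ q in qbar..1, Real.sqrt (ξ.xi2 q)) := by
  intro L α a
  obtain ⟨b, hb1, hd1, hd2, hc3, hsum2⟩ := ξ.setup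
  obtain ⟨hq0, hq1⟩ := hqbar
  have hsub : ∀ x : ℝ, 0 ≤ x → x ≤ 1 → x ∈ Ioo (-b) b := fun x h0 h1 =>
    ⟨by linarith, by linarith⟩
  -- defining equations
  have hL : L = (Real.sqrt (ξ.xi2 qbar))⁻¹ := rfl
  have haq : ∀ q, a q = ∫ r in (0 : ℝ)..q, α r := fun _ => rfl
  have hα0 : ∀ s, s < qbar → α s = 0 := fun s h => if_pos h
  have hαdef : ∀ s, ¬s < qbar → α s = ξ.xi3 s / (2 * ξ.xi2 s ^ ((3 : ℝ) / 2)) :=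
    fun s h => if_neg h
  -- positivity of ξ''
  have h2pos : ∀ q : ℝ, 0 < q → q ≤ 1 → 0 < ξ.xi2 q := by
    intro q hq hq1'
    obtain ⟨p0, hp0⟩ := ξ.nontrivial
    have hp0pos : 0 < ξ.coeff p0 := lt_of_le_of_ne (ξ.coeff_nonneg p0) (Ne.symm hp0)
    have hp02 : 2 ≤ p0 := by
      rcases p0 with _ | _ | n
      · exact absurd ξ.coeff_zero hp0
      · exact absurd ξ.coeff_one hp0
      · omega
    have hs := hsum2 q (hsub q hq.le hq1')
    have hnn : ∀ j : ℕ, 0 ≤ (j : ℝ) * ((j : ℝ) - 1) * ξ.coeff j * q ^ (j - 2) := by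
      intro j
      rcases Nat.eq_zero_or_pos j with h | h
      · subst h; simp
      · have h1' : (1 : ℝ) ≤ (j : ℝ) := by exact_mod_cast h
        have hcj := ξ.coeff_nonneg j
        have hqp := (pow_pos hq (j - 2)).le
        apply mul_nonneg (mul_nonneg (mul_nonneg (by linarith) (by linarith)) hcj) hqp
    have hterm : 0 < (p0 : ℝ) * ((p0 : ℝ) - 1) * ξ.coeff p0 * q ^ (p0 - 2) := by
      have h2' : (2 : ℝ) ≤ (p0 : ℝ) := by exact_mod_cast hp02
      exact mul_pos (mul_pos (mul_pos (by linarith) (by linarith)) hp0pos) (pow_pos hq _)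
    exact lt_of_lt_of_le hterm (Summable.le_tsum hs p0 fun j _ => hnn j)
  have h2q : 0 < ξ.xi2 qbar := h2pos qbar hq0 hq1.le
  have hK : 0 < Real.sqrt (ξ.xi2 qbar) := Real.sqrt_pos.mpr h2q
  have hKne : Real.sqrt (ξ.xi2 qbar) ≠ 0 := ne_of_gt hK
  -- continuity of ξ''
  have hc2 : ∀ x : ℝ, 0 ≤ x → x ≤ 1 → ContinuousAt ξ.xi2 x := fun x h0 h1 =>
    (hd2 x (hsub x h0 h1)).continuousAt
  have hc2' : ContinuousOn ξ.xi2 (Icc qbar 1) := fun x hx =>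
    (hc2 x (le_trans hq0.le hx.1) hx.2).continuousWithinAt
  have hsq' : ContinuousOn (fun q => Real.sqrt (ξ.xi2 q)) (Icc qbar 1) :=
    fun x hx => (hc2' x hx).sqrt
  -- derivative of the potential on [qbar, 1]
  have hg : ∀ s, qbar ≤ s → s ≤ 1 →
      HasDerivAt (fun t => -(Real.sqrt (ξ.xi2 t))⁻¹) (α s) s := by
    intro s hs1 hs2
    have hs0 : 0 < s := lt_of_lt_of_le hq0 hs1
    have hpos : 0 < ξ.xi2 s := h2pos s hs0 hs2
    have hsq : 0 < Real.sqrt (ξ.xi2 s) := Real.sqrt_pos.mpr hpos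
    have h1 : HasDerivAt (fun t => Real.sqrt (ξ.xi2 t))
        (ξ.xi3 s / (2 * Real.sqrt (ξ.xi2 s))) s :=
      (hd2 s (hsub s hs0.le hs2)).sqrt (ne_of_gt hpos)
    have h2 := (h1.inv (ne_of_gt hsq)).neg
    rw [hαdef s (not_lt.mpr hs1)]
    convert h2 using 1
    · rfl
    · rfl
    · rfl
    have hrpow : ξ.xi2 s ^ ((3 : ℝ) / 2) = ξ.xi2 s * Real.sqrt (ξ.xi2 s) := by
      rw [show (3 : ℝ) / 2 = 1 + 1 / 2 by norm_num, Real.rpow_add hpos, Real.rpow_one,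
        ← Real.sqrt_eq_rpow]
    rw [hrpow, Real.sq_sqrt hpos.le]
    field_simp
  -- a.e. avoidance of qbar
  have hne : ∀ᵐ x : ℝ, x ≠ qbar := by
    rw [ae_iff]
    have h : {x : ℝ | ¬x ≠ qbar} = {qbar} := by ext x; simp
    rw [h]
    exact measure_singleton qbar
  -- a vanishes on [0, qbar]
  have ha0 : ∀ q, 0 ≤ q → q ≤ qbar → a q = 0 := by
    intro q h0 h1
    rw [haq q]
    have h : (∫ r in (0 : ℝ)..q, α r) = ∫ r in (0 : ℝ)..q, (0 : ℝ) := by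
      apply intervalIntegral.integral_congr_ae
      filter_upwards [hne] with x hx hmem
      rw [uIoc_of_le h0] at hmem
      exact hα0 x (lt_of_le_of_ne (le_trans hmem.2 h1) hx)
    rw [h, intervalIntegral.integral_zero]
  have hαint0 : IntervalIntegrable α volume 0 qbar := by
    rw [intervalIntegrable_iff, uIoc_of_le hq0.le]
    have h : (fun _ : ℝ => (0 : ℝ)) =ᵐ[volume.restrict (Ioc (0 : ℝ) qbar)] α := by
      rw [Filter.EventuallyEq, ae_restrict_iff' measurableSet_Ioc]
      filter_upwards [hne] with x hx hmem
      exact (hα0 x (lt_of_le_of_ne hmem.2 hx)).symm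
    exact (integrable_zero _ _ _).congr h
  -- α is continuous on [qbar, 1]
  have hαcont : ContinuousOn α (Icc qbar 1) := by
    have hF : ContinuousOn (fun s => ξ.xi3 s / (2 * ξ.xi2 s ^ ((3 : ℝ) / 2))) (Icc qbar 1) := by
      intro x hx
      have hx0 : 0 < x := lt_of_lt_of_le hq0 hx.1
      have hpos : 0 < ξ.xi2 x := h2pos x hx0 hx.2
      apply ContinuousWithinAt.div
      · exact (hc3 x (hsub x hx0.le hx.2)).continuousWithinAt
      · exact continuousWithinAt_const.mul ((hc2' x hx).rpow_const (Or.inl (ne_of_gt hpos)))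
      · exact ne_of_gt (mul_pos two_pos (Real.rpow_pos_of_pos hpos _))
    exact hF.congr fun s hs => hαdef s (not_lt.mpr hs.1)
  have hαint1 : ∀ x, qbar ≤ x → x ≤ 1 → IntervalIntegrable α volume qbar x := by
    intro x h1 h2
    apply ContinuousOn.intervalIntegrable
    rw [uIcc_of_le h1]
    exact hαcont.mono (Icc_subset_Icc le_rfl h2)
  -- FTC on [qbar, x]
  have hax : ∀ x, qbar ≤ x → x ≤ 1 →
      (∫ r in qbar..x, α r) = (Real.sqrt (ξ.xi2 qbar))⁻¹ - (Real.sqrt (ξ.xi2 x))⁻¹ := by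
    intro x h1 h2
    have h := intervalIntegral.integral_eq_sub_of_hasDerivAt
      (f := fun t => -(Real.sqrt (ξ.xi2 t))⁻¹) (f' := α) ?_ (hαint1 x h1 h2)
    · rw [h]; ring
    · intro t ht
      rw [uIcc_of_le h1] at ht
      exact hg t ht.1 (le_trans ht.2 h2)
  have ha1 : ∀ q, qbar ≤ q → q ≤ 1 →
      a q = (Real.sqrt (ξ.xi2 qbar))⁻¹ - (Real.sqrt (ξ.xi2 q))⁻¹ := by
    intro q h1 h2
    rw [haq q, ← intervalIntegral.integral_add_adjacent_intervals hαint0 (hαint1 q h1 h2),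
      hax q h1 h2]
    have h0 : (∫ r in (0 : ℝ)..qbar, α r) = 0 := by
      rw [← haq qbar]; exact ha0 qbar hq0.le le_rfl
    rw [h0, zero_add]
  -- the two integrals, piece by piece
  have hEq2a : EqOn (fun q => ξ.xi2 q * a q) (fun _ => (0 : ℝ)) (uIcc (0 : ℝ) qbar) := by
    intro q hq
    rw [uIcc_of_le hq0.le] at hq
    simp only
    rw [ha0 q hq.1 hq.2, mul_zero]
  have hint2a : IntervalIntegrable (fun q => ξ.xi2 q * a q) volume 0 qbar :=
    (ContinuousOn.congr continuousOn_const hEq2a).intervalIntegrable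
  have i2a : (∫ q in (0 : ℝ)..qbar, ξ.xi2 q * a q) = 0 := by
    rw [intervalIntegral.integral_congr hEq2a, intervalIntegral.integral_const, smul_zero]
  have hEq2b : EqOn (fun q => ξ.xi2 q * a q)
      (fun q => L * ξ.xi2 q - Real.sqrt (ξ.xi2 q)) (uIcc qbar 1) := by
    intro q hq
    rw [uIcc_of_le hq1.le] at hq
    have hmul : ξ.xi2 q * (Real.sqrt (ξ.xi2 q))⁻¹ = Real.sqrt (ξ.xi2 q) := by
      rw [← div_eq_mul_inv, Real.div_sqrt]
    simp only
    rw [ha1 q hq.1 hq.2, mul_sub, hmul, ← hL]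
    ring
  have hcF2 : ContinuousOn (fun q => L * ξ.xi2 q - Real.sqrt (ξ.xi2 q)) (Icc qbar 1) :=
    (continuousOn_const.mul hc2').sub hsq'
  have hint2b : IntervalIntegrable (fun q => ξ.xi2 q * a q) volume qbar 1 := by
    apply ContinuousOn.intervalIntegrable
    rw [uIcc_of_le hq1.le]
    exact (hcF2.congr (by rwa [uIcc_of_le hq1.le] at hEq2b))
  have hFTC1 : (∫ q in qbar..1, ξ.xi2 q) = ξ.xi1 1 - ξ.xi1 qbar := by
    apply intervalIntegral.integral_eq_sub_of_hasDerivAt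
    · intro t ht
      rw [uIcc_of_le hq1.le] at ht
      exact hd1 t (hsub t (le_trans hq0.le ht.1) ht.2)
    · apply ContinuousOn.intervalIntegrable
      rw [uIcc_of_le hq1.le]
      exact hc2'
  have i2b : (∫ q in qbar..1, ξ.xi2 q * a q)
      = L * (ξ.xi1 1 - ξ.xi1 qbar) - (∫ q in qbar..1, Real.sqrt (ξ.xi2 q)) := by
    rw [intervalIntegral.integral_congr hEq2b]
    have hii1 : IntervalIntegrable (fun q => L * ξ.xi2 q) volume qbar 1 := by
      apply ContinuousOn.intervalIntegrable
      rw [uIcc_of_le hq1.le]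
      exact continuousOn_const.mul hc2'
    have hii2 : IntervalIntegrable (fun q => Real.sqrt (ξ.xi2 q)) volume qbar 1 := by
      apply ContinuousOn.intervalIntegrable
      rw [uIcc_of_le hq1.le]
      exact hsq'
    rw [intervalIntegral.integral_sub hii1 hii2, intervalIntegral.integral_const_mul, hFTC1]
  have e2 : (∫ q in (0 : ℝ)..1, ξ.xi2 q * a q)
      = L * (ξ.xi1 1 - ξ.xi1 qbar) - (∫ q in qbar..1, Real.sqrt (ξ.xi2 q)) := by
    rw [← intervalIntegral.integral_add_adjacent_intervals hint2a hint2b, i2a, i2b, zero_add]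
  have hEq3a : EqOn (fun q => (L - a q)⁻¹) (fun _ => Real.sqrt (ξ.xi2 qbar))
      (uIcc (0 : ℝ) qbar) := by
    intro q hq
    rw [uIcc_of_le hq0.le] at hq
    simp only
    rw [ha0 q hq.1 hq.2, sub_zero, hL, inv_inv]
  have hint3a : IntervalIntegrable (fun q => (L - a q)⁻¹) volume 0 qbar :=
    (ContinuousOn.congr continuousOn_const hEq3a).intervalIntegrable
  have i3a : (∫ q in (0 : ℝ)..qbar, (L - a q)⁻¹) = qbar * Real.sqrt (ξ.xi2 qbar) := by
    rw [intervalIntegral.integral_congr hEq3a, intervalIntegral.integral_const, sub_zero,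
      smul_eq_mul]
  have hEq3b : EqOn (fun q => (L - a q)⁻¹) (fun q => Real.sqrt (ξ.xi2 q)) (uIcc qbar 1) := by
    intro q hq
    rw [uIcc_of_le hq1.le] at hq
    simp only
    rw [ha1 q hq.1 hq.2, hL, sub_sub_cancel, inv_inv]
  have hint3b : IntervalIntegrable (fun q => (L - a q)⁻¹) volume qbar 1 := by
    apply ContinuousOn.intervalIntegrable
    rw [uIcc_of_le hq1.le]
    exact hsq'.congr (by rwa [uIcc_of_le hq1.le] at hEq3b)
  have i3b : (∫ q in qbar..1, (L - a q)⁻¹) = ∫ q in qbar..1, Real.sqrt (ξ.xi2 q) :=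
    intervalIntegral.integral_congr hEq3b
  have e3 : (∫ q in (0 : ℝ)..1, (L - a q)⁻¹)
      = qbar * Real.sqrt (ξ.xi2 qbar) + (∫ q in qbar..1, Real.sqrt (ξ.xi2 q)) := by
    rw [← intervalIntegral.integral_add_adjacent_intervals hint3a hint3b, i3a, i3b]
  constructor
  · have h1pos : 0 < (Real.sqrt (ξ.xi2 1))⁻¹ :=
      inv_pos.mpr (Real.sqrt_pos.mpr (h2pos 1 one_pos le_rfl))
    have h : (∫ r in (0 : ℝ)..1, α r) = L - (Real.sqrt (ξ.xi2 1))⁻¹ := by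
      rw [← haq 1, ha1 1 hq1.le le_rfl, hL]
    rw [h]
    linarith
  · rw [e2, e3, hL]
    have hms := Real.mul_self_sqrt h2q.le
    have key2 : (c + ξ.xi1 qbar) * (Real.sqrt (ξ.xi2 qbar))⁻¹
        = qbar * Real.sqrt (ξ.xi2 qbar) := by
      field_simp
      linear_combination hfix - qbar * hms
    linear_combination key2
end

section
/- Let ξ be a mixture function, let q₀∈(0,1), and let c≥0 satisfy c+ξ'(q₀)=q₀·ξ''(q₀). Assume the map s↦ξ''(s)^{-1/2} is concave on [q₀,1]. Define L=ξ''(q₀)^{-1/2} and α(s)=0 for s∈[0,q₀), α(s)=ξ'''(s)/(2·ξ''(s)^{3/2}) for s∈[q₀,1], and set a(q)=∫₀^q α(r)dr. Then α is nonnegative and nondecreasing on [0,1], L−∫_{q₀}^s α(r)dr = ξ''(s)^{-1/2} for every s∈[q₀,1], L>∫₀¹α(r)dr, and ξ'(s)+c = ∫₀^s (L−a(q))^{-2} dq for every s∈[q₀,1]. -/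
open Set Filter MeasureTheory

theorem MixtureFunction.derivs (ξ : MixtureFunction) :
    (∀ x ∈ Icc (0:ℝ) 1, Summable (fun p : ℕ => (p:ℝ) * ((p:ℝ)-1) * ξ.coeff p * x ^ (p-2))) ∧
    (∀ x ∈ Icc (0:ℝ) 1, HasDerivAt ξ.xi1 (ξ.xi2 x) x) ∧
    (∀ x ∈ Icc (0:ℝ) 1, HasDerivAt ξ.xi2 (ξ.xi3 x) x) := by
  obtain ⟨C, r, hC, hr0, hr1, hb⟩ := ξ.coeff_decay
  set ρ : ℝ := (1 + r⁻¹) / 2 with hρ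
  have hr1' : (1:ℝ) < r⁻¹ := (one_lt_inv₀ hr0).2 hr1
  have hρ1 : 1 < ρ := by rw [hρ]; linarith
  have hρr : r * ρ < 1 := by
    have : ρ < r⁻¹ := by rw [hρ]; linarith
    calc r * ρ < r * r⁻¹ := by exact mul_lt_mul_of_pos_left this hr0
    _ = 1 := mul_inv_cancel₀ (ne_of_gt hr0)
  have hρ0 : 0 < ρ := by linarith
  have hrρ0 : 0 ≤ r * ρ := by positivity
  have ht : IsOpen (Ioo (-ρ) ρ) := isOpen_Ioo
  have htc : IsPreconnected (Ioo (-ρ) ρ) := (convex_Ioo _ _).isPreconnected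
  have hsub : Icc (0:ℝ) 1 ⊆ Ioo (-ρ) ρ := fun x hx =>
    ⟨by linarith [hx.1], by linarith [hx.2]⟩
  have h0mem : (0:ℝ) ∈ Ioo (-ρ) ρ := ⟨by linarith, hρ0⟩
  -- generic power bound
  have hpow : ∀ (z : ℝ), z ∈ Ioo (-ρ) ρ → ∀ m p : ℕ, m ≤ p → |z ^ m| ≤ ρ ^ p := by
    intro z hz m p hmp
    rw [abs_pow]
    calc |z| ^ m ≤ ρ ^ m := pow_le_pow_left₀ (abs_nonneg z) (by
        rw [abs_le]; constructor <;> [linarith [hz.1]; linarith [hz.2]]) m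
    _ ≤ ρ ^ p := pow_le_pow_right₀ (le_of_lt hρ1) hmp
  have hu : Summable (fun p : ℕ => C * ((p:ℝ) ^ 3 * (r * ρ) ^ p)) := by
    refine Summable.mul_left C ?_
    have := summable_pow_mul_geometric_of_norm_lt_one (R := ℝ) 3
      (r := r * ρ) (by rw [Real.norm_eq_abs, abs_of_nonneg hrρ0]; exact hρr)
    exact this
  have hcoeff_abs : ∀ p : ℕ, |ξ.coeff p| ≤ C * r ^ p := fun p => by
    rw [abs_of_nonneg (ξ.coeff_nonneg p)]; exact hb p
  -- bound for xi2-type terms' derivative and all others: any product of at most three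
  -- polynomial factors each ≤ p in abs, times coeff p, times z^m with m ≤ p.
  have key : ∀ (p : ℕ) (A : ℝ), |A| ≤ (p:ℝ)^3 → ∀ z ∈ Ioo (-ρ) ρ, ∀ m, m ≤ p →
      |A * ξ.coeff p * z ^ m| ≤ C * ((p:ℝ) ^ 3 * (r * ρ) ^ p) := by
    intro p A hA z hz m hmp
    have h1 : |A * ξ.coeff p * z ^ m| = |A| * |ξ.coeff p| * |z ^ m| := by
      rw [abs_mul, abs_mul]
    rw [h1, mul_pow]
    have hzb := hpow z hz m p hmp
    calc |A| * |ξ.coeff p| * |z ^ m| ≤ (p:ℝ)^3 * (C * r ^ p) * ρ ^ p := by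
          apply mul_le_mul _ hzb (abs_nonneg _) (by positivity)
          exact mul_le_mul hA (hcoeff_abs p) (abs_nonneg _) (by positivity)
    _ = C * ((p:ℝ)^3 * (r ^ p * ρ ^ p)) := by ring
  have hA1 : ∀ p : ℕ, |(p:ℝ) * ((p-1:ℕ):ℝ)| ≤ (p:ℝ)^3 := by
    intro p
    rcases p with _ | n
    · norm_num
    · rw [abs_of_nonneg (by positivity), Nat.add_sub_cancel]
      push_cast
      nlinarith [Nat.cast_nonneg (α := ℝ) n, sq_nonneg ((n:ℝ)), sq_nonneg ((n:ℝ)+1), sq_nonneg ((n:ℝ)+2)]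
  have hA2 : ∀ p : ℕ, |(p:ℝ) * ((p:ℝ)-1)| ≤ (p:ℝ)^3 := by
    intro p
    rcases p with _ | n
    · norm_num
    · push_cast
      rw [show ((n:ℝ)+1) * (((n:ℝ)+1)-1) = ((n:ℝ)+1) * n by ring,
        abs_of_nonneg (by positivity)]
      nlinarith [Nat.cast_nonneg (α := ℝ) n, sq_nonneg ((n:ℝ)), sq_nonneg ((n:ℝ)+1), sq_nonneg ((n:ℝ)+2)]
  have hA2' : ∀ p : ℕ, |(p:ℝ) * ((p:ℝ)-1) * ((p-2:ℕ):ℝ)| ≤ (p:ℝ)^3 := by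
    intro p
    match p with
    | 0 => norm_num
    | 1 => norm_num
    | (n+2) =>
      rw [show (n+2) - 2 = n from by omega]
      push_cast
      rw [show ((n:ℝ)+2) * (((n:ℝ)+2)-1) * n = ((n:ℝ)+2) * ((n:ℝ)+1) * n by ring,
        abs_of_nonneg (by positivity)]
      nlinarith [Nat.cast_nonneg (α := ℝ) n, sq_nonneg ((n:ℝ)), sq_nonneg ((n:ℝ)+1), sq_nonneg ((n:ℝ)+2)]
  have hA3 : ∀ p : ℕ, |(p:ℝ) * ((p:ℝ)-1) * ((p:ℝ)-2)| ≤ (p:ℝ)^3 := by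
    intro p
    match p with
    | 0 => norm_num
    | 1 => norm_num
    | (n+2) =>
      push_cast
      rw [show ((n:ℝ)+2) * (((n:ℝ)+2)-1) * (((n:ℝ)+2)-2) = ((n:ℝ)+2) * ((n:ℝ)+1) * n by ring,
        abs_of_nonneg (by positivity)]
      nlinarith [Nat.cast_nonneg (α := ℝ) n, sq_nonneg ((n:ℝ)), sq_nonneg ((n:ℝ)+1), sq_nonneg ((n:ℝ)+2)]
  refine ⟨?_, ?_, ?_⟩
  · -- summability of xi2 terms
    intro x hx
    refine Summable.of_norm_bounded hu (fun p => ?_)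
    rw [Real.norm_eq_abs]
    exact key p _ (hA2 p) x (hsub hx) _ (by omega)
  · -- xi1' = xi2
    intro x hx
    have H := hasDerivAt_tsum_of_isPreconnected hu ht htc
      (g := fun (p : ℕ) (z : ℝ) => (p:ℝ) * ξ.coeff p * z ^ (p-1))
      (g' := fun (p : ℕ) (y : ℝ) => (p:ℝ) * ξ.coeff p * (((p-1:ℕ):ℝ) * y ^ (p-1-1)))
      (fun p y _ => (hasDerivAt_pow (p-1) y).const_mul ((p:ℝ) * ξ.coeff p))
      (fun p y hy => by
        rw [Real.norm_eq_abs]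
        show |(p:ℝ) * ξ.coeff p * (((p-1:ℕ):ℝ) * y ^ (p-1-1))| ≤ _
        rw [show (p:ℝ) * ξ.coeff p * (((p-1:ℕ):ℝ) * y ^ (p-1-1))
            = ((p:ℝ) * ((p-1:ℕ):ℝ)) * ξ.coeff p * y ^ (p-1-1) from by ring]
        exact key p _ (hA1 p) y hy _ (by omega))
      h0mem
      (summable_of_ne_finset_zero (s := ({0,1} : Finset ℕ)) (by
        intro p hp
        simp only [Finset.mem_insert, Finset.mem_singleton] at hp
        push_neg at hp
        have h1 : p - 1 ≠ 0 := by omega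
        simp [zero_pow h1]))
      (hsub hx)
    have e2 : (∑' p : ℕ, (p:ℝ) * ξ.coeff p * (((p-1:ℕ):ℝ) * x ^ (p-1-1))) = ξ.xi2 x := by
      refine tsum_congr fun p => ?_
      rcases p with _ | n
      · simp
      · simp only [Nat.succ_sub_one, Nat.succ_sub_succ, Nat.sub_zero]
        push_cast
        ring
    rw [e2] at H
    exact H
  · -- xi2' = xi3
    intro x hx
    have H := hasDerivAt_tsum_of_isPreconnected hu ht htc
      (g := fun (p : ℕ) (z : ℝ) => (p:ℝ) * ((p:ℝ)-1) * ξ.coeff p * z ^ (p-2))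
      (g' := fun (p : ℕ) (y : ℝ) => (p:ℝ) * ((p:ℝ)-1) * ξ.coeff p * (((p-2:ℕ):ℝ) * y ^ (p-2-1)))
      (fun p y _ => (hasDerivAt_pow (p-2) y).const_mul ((p:ℝ) * ((p:ℝ)-1) * ξ.coeff p))
      (fun p y hy => by
        rw [Real.norm_eq_abs]
        show |(p:ℝ) * ((p:ℝ)-1) * ξ.coeff p * (((p-2:ℕ):ℝ) * y ^ (p-2-1))| ≤ _
        rw [show (p:ℝ) * ((p:ℝ)-1) * ξ.coeff p * (((p-2:ℕ):ℝ) * y ^ (p-2-1))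
            = ((p:ℝ) * ((p:ℝ)-1) * ((p-2:ℕ):ℝ)) * ξ.coeff p * y ^ (p-2-1) from by ring]
        exact key p _ (hA2' p) y hy _ (by omega))
      h0mem
      (summable_of_ne_finset_zero (s := ({0,1,2} : Finset ℕ)) (by
        intro p hp
        simp only [Finset.mem_insert, Finset.mem_singleton] at hp
        push_neg at hp
        have h1 : p - 2 ≠ 0 := by omega
        simp [zero_pow h1]))
      (hsub hx)
    have e2 : (∑' p : ℕ, (p:ℝ) * ((p:ℝ)-1) * ξ.coeff p * (((p-2:ℕ):ℝ) * x ^ (p-2-1))) = ξ.xi3 x := by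
      refine tsum_congr fun p => ?_
      match p with
      | 0 => norm_num
      | 1 => norm_num
      | (n+2) =>
        rw [show (n+2) - 2 = n from by omega, show (n+2) - 3 = n - 1 from by omega]
        push_cast
        ring
    rw [e2] at H
    exact H

theorem MixtureFunction.xi2_pos (ξ : MixtureFunction) {x : ℝ} (hx : x ∈ Ioc (0:ℝ) 1) :
    0 < ξ.xi2 x := by
  obtain ⟨hs2, -, -⟩ := ξ.derivs
  obtain ⟨p, hp⟩ := ξ.nontrivial
  have hp2 : 2 ≤ p := by
    rcases p with _ | _ | n
    · exact absurd ξ.coeff_zero hp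
    · exact absurd ξ.coeff_one hp
    · omega
  have hx0 : (0:ℝ) ≤ x := le_of_lt hx.1
  have hterm : ∀ q : ℕ, 0 ≤ (q:ℝ) * ((q:ℝ)-1) * ξ.coeff q * x ^ (q-2) := by
    intro q
    rcases q with _ | n
    · simp
    · have h1 : (0:ℝ) ≤ ((n+1:ℕ):ℝ) - 1 := by
        push_cast; linarith [Nat.cast_nonneg (α := ℝ) n]
      have h2 := ξ.coeff_nonneg (n+1)
      have h3 : (0:ℝ) ≤ x ^ (n+1-2) := pow_nonneg hx0 _
      have h4 : (0:ℝ) ≤ ((n+1:ℕ):ℝ) := Nat.cast_nonneg _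
      positivity
  have hcp : 0 < ξ.coeff p := lt_of_le_of_ne (ξ.coeff_nonneg p) (Ne.symm hp)
  have h2p : (2:ℝ) ≤ (p:ℝ) := by exact_mod_cast hp2
  have hpos : 0 < (p:ℝ) * ((p:ℝ)-1) * ξ.coeff p * x ^ (p-2) :=
    mul_pos (mul_pos (mul_pos (by linarith) (by linarith)) hcp) (pow_pos hx.1 _)
  calc (0:ℝ) < (p:ℝ) * ((p:ℝ)-1) * ξ.coeff p * x ^ (p-2) := hpos
  _ ≤ ξ.xi2 x := Summable.le_tsum (hs2 x ⟨hx0, hx.2⟩) p (fun q _ => hterm q)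

theorem MixtureFunction.xi3_nonneg (ξ : MixtureFunction) {x : ℝ} (hx : x ∈ Icc (0:ℝ) 1) :
    0 ≤ ξ.xi3 x := by
  refine tsum_nonneg fun q => ?_
  match q with
  | 0 => norm_num
  | 1 => norm_num
  | (n+2) =>
    have h2 := ξ.coeff_nonneg (n+2)
    have h3 : (0:ℝ) ≤ x ^ (n+2-3) := pow_nonneg hx.1 _
    have h1 : (0:ℝ) ≤ ((n+2:ℕ):ℝ) - 1 := by push_cast; linarith [Nat.cast_nonneg (α := ℝ) n]
    have h1' : (0:ℝ) ≤ ((n+2:ℕ):ℝ) - 2 := by push_cast; linarith [Nat.cast_nonneg (α := ℝ) n]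
    have h4 : (0:ℝ) ≤ ((n+2:ℕ):ℝ) := Nat.cast_nonneg _
    positivity

/-- Concavity of `ξ''^{-1/2}` yields the explicit no-overlap-gap order parameter: with
`L = ξ''(q₀)^{-1/2}`, `α = 0` on `[0,q₀)` and `α(s) = ξ'''(s)/(2 ξ''(s)^{3/2})` on `[q₀,1]`,
`α` is nonnegative and nondecreasing, `L - ∫_{q₀}^s α = ξ''(s)^{-1/2}` on `[q₀,1]`,
`L > ∫₀¹ α`, and the zero-temperature stationarity condition
`ξ'(s) + c = ∫₀^s (L - a(q))⁻² dq` holds on `[q₀,1]`. -/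
theorem concavity_gives_stationary_order_parameter (ξ : MixtureFunction)
    (q₀ : ℝ) (hq₀ : q₀ ∈ Ioo (0 : ℝ) 1)
    (c : ℝ) (hc : 0 ≤ c) (hfix : c + ξ.xi1 q₀ = q₀ * ξ.xi2 q₀)
    (hconc : ConcaveOn ℝ (Icc q₀ 1) (fun s => (Real.sqrt (ξ.xi2 s))⁻¹)) :
    let L : ℝ := (Real.sqrt (ξ.xi2 q₀))⁻¹
    let α : ℝ → ℝ := fun s => if s < q₀ then 0 else ξ.xi3 s / (2 * ξ.xi2 s ^ ((3 : ℝ) / 2))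
    let a : ℝ → ℝ := fun q => ∫ r in (0 : ℝ)..q, α r
    (∀ s ∈ Icc (0 : ℝ) 1, 0 ≤ α s) ∧
      MonotoneOn α (Icc 0 1) ∧
      (∀ s ∈ Icc q₀ 1, L - (∫ r in q₀..s, α r) = (Real.sqrt (ξ.xi2 s))⁻¹) ∧
      (∫ r in (0 : ℝ)..1, α r) < L ∧
      (∀ s ∈ Icc q₀ 1, ξ.xi1 s + c = ∫ q in (0 : ℝ)..s, ((L - a q)⁻¹) ^ 2) := by
  obtain ⟨hs2, hd1, hd2⟩ := ξ.derivs
  obtain ⟨hq0pos, hq0lt1⟩ := hq₀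
  intro L α a
  set f : ℝ → ℝ := fun s => (Real.sqrt (ξ.xi2 s))⁻¹ with hfdef
  have hq0Icc : q₀ ∈ Icc (0:ℝ) 1 := ⟨le_of_lt hq0pos, le_of_lt hq0lt1⟩
  have hsub01 : Icc q₀ 1 ⊆ Icc (0:ℝ) 1 := Icc_subset_Icc (le_of_lt hq0pos) le_rfl
  have hpos2 : ∀ s ∈ Icc q₀ 1, 0 < ξ.xi2 s := fun s hs =>
    ξ.xi2_pos ⟨lt_of_lt_of_le hq0pos hs.1, hs.2⟩
  have hα0 : ∀ s, s < q₀ → α s = 0 := fun s h => if_pos h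
  have hαf : ∀ s ∈ Icc q₀ 1, α s = ξ.xi3 s / (2 * ξ.xi2 s ^ ((3:ℝ)/2)) :=
    fun s hs => if_neg (not_lt.2 hs.1)
  have hL : L = f q₀ := rfl
  -- derivative of f on [q₀, 1]
  have hf : ∀ s ∈ Icc q₀ 1, HasDerivAt f (-(α s)) s := by
    intro s hs
    have hx2 := hd2 s (hsub01 hs)
    have hp := hpos2 s hs
    have hsq : (0:ℝ) < Real.sqrt (ξ.xi2 s) := Real.sqrt_pos.2 hp
    have h1 : HasDerivAt (fun u => Real.sqrt (ξ.xi2 u))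
        (ξ.xi3 s / (2 * Real.sqrt (ξ.xi2 s))) s := hx2.sqrt (ne_of_gt hp)
    have h2 := h1.inv (ne_of_gt hsq)
    have hx32 : ξ.xi2 s ^ ((3:ℝ)/2) = ξ.xi2 s * Real.sqrt (ξ.xi2 s) := by
      rw [show (3:ℝ)/2 = 1 + 1/2 by norm_num, Real.rpow_add hp, Real.rpow_one,
        ← Real.sqrt_eq_rpow]
    have heq : -(ξ.xi3 s / (2 * Real.sqrt (ξ.xi2 s))) / Real.sqrt (ξ.xi2 s) ^ 2 = -(α s) := by
      rw [hαf s hs, hx32, neg_div, neg_inj, div_div, Real.sq_sqrt (le_of_lt hp)]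
      ring_nf
    rw [heq] at h2
    exact h2
  -- nonnegativity of α
  have hα_nonneg : ∀ s ∈ Icc (0:ℝ) 1, 0 ≤ α s := by
    intro s hs
    by_cases h : s < q₀
    · rw [hα0 s h]
    · have hs' : s ∈ Icc q₀ 1 := ⟨not_lt.1 h, hs.2⟩
      rw [hαf s hs']
      have h3 := ξ.xi3_nonneg hs
      have h2 := hpos2 s hs'
      positivity
  -- monotonicity of α
  have hα_mono : MonotoneOn α (Icc (0:ℝ) 1) := by
    intro x hx y hy hxy
    by_cases hy' : y < q₀
    · rw [hα0 x (lt_of_le_of_lt hxy hy'), hα0 y hy']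
    · by_cases hx' : x < q₀
      · rw [hα0 x hx']; exact hα_nonneg y hy
      · have hxm : x ∈ Icc q₀ 1 := ⟨not_lt.1 hx', hx.2⟩
        have hym : y ∈ Icc q₀ 1 := ⟨not_lt.1 hy', hy.2⟩
        have hanti := hconc.antitoneOn_deriv
          (fun t ht => (hf t ht).differentiableAt) hxm hym hxy
        have hdx : deriv f x = -(α x) := (hf x hxm).deriv
        have hdy : deriv f y = -(α y) := (hf y hym).deriv
        rw [hfdef] at hdx hdy
        rw [hdx, hdy] at hanti
        linarith
  -- FTC on [q₀, s]
  have hint3 : ∀ s ∈ Icc q₀ 1, (∫ r in q₀..s, α r) = f q₀ - f s := by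
    intro s hs
    have hIcc : Icc q₀ s ⊆ Icc q₀ 1 := Icc_subset_Icc le_rfl hs.2
    have hder : ∀ t ∈ uIcc q₀ s, HasDerivAt (fun u => -f u) (α t) t := by
      intro t ht
      rw [uIcc_of_le hs.1] at ht
      have := (hf t (hIcc ht)).neg
      rwa [neg_neg] at this
    have hintg : IntervalIntegrable α volume q₀ s := by
      refine (hα_mono.mono ?_).intervalIntegrable
      rw [uIcc_of_le hs.1]
      exact fun t ht => ⟨le_trans hq0Icc.1 ht.1, le_trans ht.2 hs.2⟩
    have h := intervalIntegral.integral_eq_sub_of_hasDerivAt hder hintg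
    rw [h]; ring
  have hpart3 : ∀ s ∈ Icc q₀ 1, L - (∫ r in q₀..s, α r) = (Real.sqrt (ξ.xi2 s))⁻¹ := by
    intro s hs
    rw [hint3 s hs, hL]; ring
  -- integral of α vanishes on [0, q₀]
  have hzero : ∀ q, 0 ≤ q → q ≤ q₀ → (∫ r in (0:ℝ)..q, α r) = 0 := by
    intro q hq0 hqq
    have hne : ∀ᵐ (x:ℝ) ∂volume, x ≠ q₀ := by
      have hset : {x : ℝ | ¬ x ≠ q₀} = {q₀} := by ext x; simp
      rw [ae_iff, hset]
      exact measure_singleton q₀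
    have hae : ∀ᵐ (x:ℝ) ∂volume, x ∈ Set.uIoc (0:ℝ) q → α x = 0 := by
      filter_upwards [hne] with x hx hxI
      rw [uIoc_of_le hq0] at hxI
      exact hα0 x (lt_of_le_of_ne (le_trans hxI.2 hqq) hx)
    rw [intervalIntegral.integral_congr_ae hae, intervalIntegral.integral_zero]
  -- part 4
  have hpart4 : (∫ r in (0:ℝ)..1, α r) < L := by
    have hi1 : IntervalIntegrable α volume 0 q₀ := by
      refine (hα_mono.mono ?_).intervalIntegrable
      rw [uIcc_of_le hq0Icc.1]
      exact Icc_subset_Icc le_rfl hq0Icc.2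
    have hi2 : IntervalIntegrable α volume q₀ 1 := by
      refine (hα_mono.mono ?_).intervalIntegrable
      rw [uIcc_of_le hq0Icc.2]
      exact Icc_subset_Icc hq0Icc.1 le_rfl
    have hsplit := intervalIntegral.integral_add_adjacent_intervals hi1 hi2
    have h1 := hzero q₀ hq0Icc.1 le_rfl
    have h2 := hint3 1 ⟨le_of_lt hq0lt1, le_rfl⟩
    have hf1 : 0 < f 1 := by
      have := hpos2 1 ⟨le_of_lt hq0lt1, le_rfl⟩
      have := Real.sqrt_pos.2 this
      positivity
    rw [← hsplit, h1, h2, hL]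
    linarith
  refine ⟨hα_nonneg, hα_mono, hpart3, hpart4, ?_⟩
  -- part 5
  intro s hs
  have hs0 : (0:ℝ) ≤ s := le_trans hq0Icc.1 hs.1
  set g : ℝ → ℝ := fun q => if q < q₀ then ξ.xi2 q₀ else ξ.xi2 q with hg
  have hglt : ∀ q, q < q₀ → g q = ξ.xi2 q₀ := fun q h => if_pos h
  have hgge : ∀ q, ¬ q < q₀ → g q = ξ.xi2 q := fun q h => if_neg h
  have hxq0 : (0:ℝ) < ξ.xi2 q₀ := hpos2 q₀ ⟨le_rfl, hq0Icc.2⟩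
  have hEq : EqOn (fun q => ((L - a q)⁻¹)^2) g (uIcc 0 s) := by
    rw [uIcc_of_le hs0]
    intro q hq
    by_cases h : q < q₀
    · have ha0 : a q = 0 := hzero q hq.1 (le_of_lt h)
      show ((L - a q)⁻¹)^2 = g q
      rw [ha0, sub_zero, hglt q h, hL, hfdef]
      simp only [inv_inv]
      exact Real.sq_sqrt (le_of_lt hxq0)
    · have hq' : q ∈ Icc q₀ 1 := ⟨not_lt.1 h, le_trans hq.2 hs.2⟩
      have haq : a q = L - f q := by
        show (∫ r in (0:ℝ)..q, α r) = L - f q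
        have hi1 : IntervalIntegrable α volume 0 q₀ := by
          refine (hα_mono.mono ?_).intervalIntegrable
          rw [uIcc_of_le hq0Icc.1]
          exact Icc_subset_Icc le_rfl hq0Icc.2
        have hi2 : IntervalIntegrable α volume q₀ q := by
          refine (hα_mono.mono ?_).intervalIntegrable
          rw [uIcc_of_le hq'.1]
          exact fun t ht => ⟨le_trans hq0Icc.1 ht.1, le_trans ht.2 hq'.2⟩
        rw [← intervalIntegral.integral_add_adjacent_intervals hi1 hi2,
          hzero q₀ hq0Icc.1 le_rfl, hint3 q hq', hL]
        ring
      show ((L - a q)⁻¹)^2 = g q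
      rw [haq, hgge q h, sub_sub_cancel, hfdef]
      simp only [inv_inv]
      exact Real.sq_sqrt (le_of_lt (hpos2 q hq'))
  rw [intervalIntegral.integral_congr hEq]
  have hgi1 : IntervalIntegrable g volume 0 q₀ := by
    refine ContinuousOn.intervalIntegrable ?_
    refine ContinuousOn.congr (continuousOn_const (c := ξ.xi2 q₀)) ?_
    rw [uIcc_of_le hq0Icc.1]
    intro q hq
    by_cases h : q < q₀
    · exact hglt q h
    · have hq' : q = q₀ := le_antisymm hq.2 (not_lt.1 h)
      rw [hgge q h, hq']
  have hEq2 : EqOn g ξ.xi2 (uIcc q₀ s) := by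
    rw [uIcc_of_le hs.1]
    intro q hq
    exact hgge q (not_lt.2 hq.1)
  have hgi2 : IntervalIntegrable g volume q₀ s := by
    refine ContinuousOn.intervalIntegrable ?_
    refine ContinuousOn.congr ?_ hEq2
    intro t ht
    rw [uIcc_of_le hs.1] at ht
    exact (hd2 t (hsub01 ⟨ht.1, le_trans ht.2 hs.2⟩)).continuousAt.continuousWithinAt
  have h1 : (∫ q in (0:ℝ)..q₀, g q) = q₀ * ξ.xi2 q₀ := by
    have hEqc : EqOn g (fun _ => ξ.xi2 q₀) (uIcc 0 q₀) := by
      rw [uIcc_of_le hq0Icc.1]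
      intro q hq
      by_cases h : q < q₀
      · exact hglt q h
      · have hq' : q = q₀ := le_antisymm hq.2 (not_lt.1 h)
        rw [hgge q h, hq']
    rw [intervalIntegral.integral_congr hEqc, intervalIntegral.integral_const]
    simp [smul_eq_mul]
  have h2 : (∫ q in q₀..s, g q) = ξ.xi1 s - ξ.xi1 q₀ := by
    rw [intervalIntegral.integral_congr hEq2]
    refine intervalIntegral.integral_eq_sub_of_hasDerivAt ?_ ?_
    · intro t ht
      rw [uIcc_of_le hs.1] at ht
      exact hd1 t (hsub01 ⟨ht.1, le_trans ht.2 hs.2⟩)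
    · refine ContinuousOn.intervalIntegrable ?_
      intro t ht
      rw [uIcc_of_le hs.1] at ht
      exact (hd2 t (hsub01 ⟨ht.1, le_trans ht.2 hs.2⟩)).continuousAt.continuousWithinAt
  rw [← intervalIntegral.integral_add_adjacent_intervals hgi1 hgi2, h1, h2]
  linarith
end
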